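/- arXiv:1004.1668 — 7 statements merged into one kernel-verified Lean document; each statement's English description precedes it below -/
import Mathlib

section
/- For any countable set A ⊆ ℂ and any dense set T ⊆ ℂ, there exists an entire function f : ℂ → ℂ which is transcendental and satisfies f(A) ⊆ T. -/
open Complex Polynomial Filter Set

namespace Stackel

noncomputable section

/-- partial sum in Horner form: `psum [(x₀,c₀),…] z = ∑ cₖ ∏_{j<k}(z - xⱼ)`. -/
def psum : List (ℂ × ℂ) → ℂ → ℂ
  | [], _ => 0
  | (x, c) :: L, z => c + (z - x) * psum L z

/-- `poly L z = ∏_{p ∈ L} (z - p.1)`. -/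
def poly : List (ℂ × ℂ) → ℂ → ℂ
  | [], _ => 1
  | (x, _) :: L, z => (z - x) * poly L z

def wt (p : ℂ × ℂ) : ℝ := ‖p.1‖ + ‖p.2‖ + 1

def bnd (L : List (ℂ × ℂ)) (r : ℝ) : ℝ := (L.map fun p => r + wt p).prod

def Mw (L : List (ℂ × ℂ)) : ℝ := (L.map wt).sum

def delta (L : List (ℂ × ℂ)) : ℝ := (2 : ℝ)⁻¹ ^ L.length / bnd L L.length

lemma wt_pos (p : ℂ × ℂ) : 0 < wt p := by
  have := norm_nonneg p.1; have := norm_nonneg p.2; unfold wt; linarith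

lemma wt_one_le (p : ℂ × ℂ) : 1 ≤ wt p := by
  have := norm_nonneg p.1; have := norm_nonneg p.2; unfold wt; linarith

lemma Mw_nonneg (L : List (ℂ × ℂ)) : 0 ≤ Mw L := by
  induction L with
  | nil => simp [Mw]
  | cons p L ih =>
      have := wt_pos p
      simp only [Mw, List.map_cons, List.sum_cons] at *
      linarith

lemma Mw_cons (p : ℂ × ℂ) (L : List (ℂ × ℂ)) : Mw (p :: L) = wt p + Mw L := by
  simp [Mw]

lemma bnd_pos (L : List (ℂ × ℂ)) {r : ℝ} (hr : 0 ≤ r) : 0 < bnd L r := by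
  induction L with
  | nil => simp [bnd]
  | cons p L ih =>
      have h1 := wt_pos p
      simp only [bnd, List.map_cons, List.prod_cons] at *
      exact mul_pos (by linarith) ih

lemma bnd_mono (L : List (ℂ × ℂ)) {r r' : ℝ} (h0 : 0 ≤ r) (h : r ≤ r') :
    bnd L r ≤ bnd L r' := by
  induction L with
  | nil => simp [bnd]
  | cons p L ih =>
      have h1 := wt_pos p
      have h2 := bnd_pos L h0
      simp only [bnd, List.map_cons, List.prod_cons] at *
      exact mul_le_mul (by linarith) ih (le_of_lt h2) (by linarith)

lemma delta_pos (L : List (ℂ × ℂ)) : 0 < delta L :=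
  div_pos (pow_pos (by norm_num) _) (bnd_pos L (Nat.cast_nonneg _))

lemma norm_poly_le (L : List (ℂ × ℂ)) (z : ℂ) : ‖poly L z‖ ≤ bnd L ‖z‖ := by
  induction L with
  | nil => simp [poly, bnd]
  | cons p L ih =>
      obtain ⟨x, c⟩ := p
      simp only [poly, bnd, List.map_cons, List.prod_cons] at *
      calc ‖(z - x) * poly L z‖ = ‖z - x‖ * ‖poly L z‖ := norm_mul _ _
        _ ≤ (‖z‖ + wt (x, c)) * bnd L ‖z‖ := by
            refine mul_le_mul ?_ ih (norm_nonneg _) ?_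
            · refine (norm_sub_le _ _).trans ?_
              have := norm_nonneg c; unfold wt; simp only; linarith
            · have := norm_nonneg z; have := wt_pos (x, c); linarith

lemma poly_eq_zero_iff (L : List (ℂ × ℂ)) (z : ℂ) :
    poly L z = 0 ↔ ∃ p ∈ L, p.1 = z := by
  induction L with
  | nil => simp [poly]
  | cons p L ih =>
      obtain ⟨x, c⟩ := p
      simp only [poly, mul_eq_zero, ih, List.mem_cons]
      constructor
      · rintro (h | ⟨q, hq, rfl⟩)
        · exact ⟨(x, c), Or.inl rfl, by simpa [sub_eq_zero, eq_comm] using h⟩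
        · exact ⟨q, Or.inr hq, rfl⟩
      · rintro ⟨q, (rfl | hq), rfl⟩
        · left; simp [sub_eq_zero]
        · right; exact ⟨q, hq, rfl⟩

lemma psum_append (L : List (ℂ × ℂ)) (x c z : ℂ) :
    psum (L ++ [(x, c)]) z = psum L z + c * poly L z := by
  induction L with
  | nil => simp [psum, poly]
  | cons p L ih =>
      obtain ⟨x', c'⟩ := p
      simp only [List.cons_append, psum, poly, List.append_eq, ih]
      ring

lemma differentiable_psum (L : List (ℂ × ℂ)) : Differentiable ℂ (psum L) := by
  induction L with
  | nil => simpa [psum] using differentiable_const (0:ℂ)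
  | cons p L ih =>
      obtain ⟨x, c⟩ := p
      simp only [psum]
      exact (differentiable_const c).add (((differentiable_id).sub (differentiable_const x)).mul ih)

lemma differentiable_poly (L : List (ℂ × ℂ)) : Differentiable ℂ (poly L) := by
  induction L with
  | nil => simpa [poly] using differentiable_const (1:ℂ)
  | cons p L ih =>
      obtain ⟨x, c⟩ := p
      simp only [poly]
      exact ((differentiable_id).sub (differentiable_const x)).mul ih

/-- upper bound for `psum`, of degree `length - 1`. -/
lemma norm_psum_le (L : List (ℂ × ℂ)) (z : ℂ) :
    ‖psum L z‖ ≤ Mw L * (‖z‖ + Mw L) ^ (L.length - 1) := by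
  induction L with
  | nil => simp [psum, Mw]
  | cons p L ih =>
      obtain ⟨x, c⟩ := p
      have hz := norm_nonneg z
      have hM' := Mw_nonneg L
      have hw := wt_one_le (x, c)
      have hwx : ‖x‖ + ‖c‖ + 1 = wt (x, c) := rfl
      have hnx := norm_nonneg x
      have hnc := norm_nonneg c
      have hMc : Mw ((x,c) :: L) = wt (x,c) + Mw L := Mw_cons _ _
      cases L with
      | nil =>
          have hexp : ((x,c) :: ([] : List (ℂ × ℂ))).length - 1 = 0 := rfl
          rw [hexp, pow_zero, mul_one, hMc]
          have : ‖psum [(x,c)] z‖ = ‖c‖ := by simp [psum]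
          rw [this]
          simp only [Mw, List.map_nil, List.sum_nil, add_zero]
          linarith
      | cons q L' =>
          set L := q :: L' with hL
          have hlen : L.length ≥ 1 := by simp [hL]
          have key : ‖psum ((x,c) :: L) z‖ ≤ ‖c‖ + (‖z‖ + ‖x‖) * ‖psum L z‖ := by
            simp only [psum]
            refine (norm_add_le _ _).trans ?_
            gcongr
            rw [norm_mul]
            gcongr
            exact norm_sub_le _ _
          refine key.trans ?_
          have h1 : ‖psum L z‖ ≤ Mw L * (‖z‖ + Mw L) ^ (L.length - 1) := ih
          set n := L.length - 1 with hn
          have hlc : ((x,c) :: L).length - 1 = n + 1 := by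
            simp [hL, hn]
          rw [hlc, hMc]
          set M := Mw L with hM
          set W := wt (x, c) with hW
          -- goal: ‖c‖ + (‖z‖+‖x‖) * psum-bound ≤ (W+M) * (‖z‖+(W+M))^(n+1)
          have h2 : (‖z‖ + ‖x‖) * ‖psum L z‖ ≤ (‖z‖ + ‖x‖) * (M * (‖z‖ + M) ^ n) := by
            have : (0:ℝ) ≤ ‖z‖ + ‖x‖ := by linarith
            exact mul_le_mul_of_nonneg_left h1 this
          have hpow : (‖z‖ + M) ^ n ≤ (‖z‖ + (W + M)) ^ n :=
            pow_le_pow_left₀ (by linarith) (by linarith) n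
          have hpow0 : (0:ℝ) ≤ (‖z‖ + M) ^ n := pow_nonneg (by linarith) n
          have h3 : M * (‖z‖ + M) ^ n ≤ (W + M) * (‖z‖ + (W + M)) ^ n := by
            have h0 : (0:ℝ) ≤ (‖z‖ + (W+M)) ^ n := pow_nonneg (by linarith) n
            nlinarith
          have h4 : (1:ℝ) ≤ (W + M) * (‖z‖ + (W + M)) ^ n := by
            have : (1:ℝ) ≤ (‖z‖ + (W + M)) ^ n := one_le_pow₀ (by linarith)
            nlinarith
          have h6 := mul_le_mul_of_nonneg_left h3 (by positivity : (0:ℝ) ≤ ‖z‖ + ‖x‖)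
          have h5 : ‖c‖ + (‖z‖ + ‖x‖) * ((W + M) * (‖z‖ + (W + M)) ^ n)
              ≤ (W + M) * (‖z‖ + (W + M)) ^ (n + 1) := by
            rw [pow_succ]
            have hcW : ‖c‖ + ‖z‖ + ‖x‖ + 1 ≤ ‖z‖ + (W + M) := by linarith
            nlinarith [pow_nonneg (by linarith : (0:ℝ) ≤ ‖z‖ + (W+M)) n]
          linarith

/-- lower bound for `poly` at large real points. -/
lemma poly_lower (L : List (ℂ × ℂ)) {t : ℝ} (ht : Mw L ≤ t) :
    (t - Mw L) ^ L.length ≤ ‖poly L (t : ℂ)‖ := by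
  induction L with
  | nil => simp [poly, Mw]
  | cons p L ih =>
      obtain ⟨x, c⟩ := p
      have hw := wt_pos (x, c)
      have hM' := Mw_nonneg L
      have hMc : Mw ((x,c) :: L) = wt (x,c) + Mw L := Mw_cons _ _
      rw [hMc] at ht ⊢
      have hM'le : Mw L ≤ t := by linarith
      have h1 : (t - (wt (x,c) + Mw L)) ^ L.length ≤ (t - Mw L) ^ L.length := by
        gcongr <;> linarith
      have hx : ‖x‖ ≤ wt (x, c) := by
        have := norm_nonneg c; unfold wt; simp only; linarith
      have h2 : t - (wt (x,c) + Mw L) ≤ ‖(t : ℂ) - x‖ := by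
        have hnt : ‖(t:ℂ)‖ = t := by
          rw [Complex.norm_real]; exact _root_.abs_of_nonneg (by linarith)
        have : ‖(t:ℂ)‖ - ‖x‖ ≤ ‖(t:ℂ) - x‖ := norm_sub_norm_le _ _
        rw [hnt] at this
        linarith
      simp only [poly, List.length_cons, norm_mul, pow_succ']
      have hnn : (0:ℝ) ≤ t - (wt (x,c) + Mw L) := by linarith
      exact mul_le_mul h2 (h1.trans (ih hM'le)) (pow_nonneg hnn _) (norm_nonneg _)

lemma one_le_Mw {L : List (ℂ × ℂ)} (h : L ≠ []) : 1 ≤ Mw L := by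
  cases L with
  | nil => exact absurd rfl h
  | cons p L =>
      have := wt_one_le p
      have := Mw_nonneg L
      rw [Mw_cons]; linarith

section Construction

variable (T : Set ℂ) (u : ℕ → ℂ)

/-- the defining property of each construction step. -/
def Spec (L : List (ℂ × ℂ)) (x c : ℂ) : Prop :=
  ‖c‖ ≤ delta L ∧
  (L.length % 2 = 0 → x = u (L.length / 2) ∧
      (psum L x + c * poly L x ∈ T ∨ (poly L x = 0 ∧ c = 0))) ∧
  (L.length % 2 = 1 → x ∉ Set.range u ∧
      ∃ t : ℝ, x = (t : ℂ) ∧ (L.length : ℝ) ≤ t ∧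
        t ^ (L.length - 1) ≤ ‖psum L x + c * poly L x‖)

lemma not_countable_Ici (a : ℝ) : ¬ (Set.Ici a).Countable := by
  intro h
  have := h.to_subtype
  have h1 : Cardinal.mk (Set.Ici a) ≤ Cardinal.aleph0 := Cardinal.mk_le_aleph0
  rw [Cardinal.mk_Ici_real] at h1
  exact Cardinal.aleph0_lt_continuum.not_ge h1

lemma exists_real_notin_range (u : ℕ → ℂ) (a : ℝ) :
    ∃ t : ℝ, a ≤ t ∧ (t : ℂ) ∉ Set.range u := by
  by_contra h
  push_neg at h
  have hsub : Set.Ici a ⊆ (fun t : ℝ => (t : ℂ)) ⁻¹' (Set.range u) := fun t ht => h t ht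
  have hc : ((fun t : ℝ => (t : ℂ)) ⁻¹' (Set.range u)).Countable :=
    (Set.countable_range u).preimage Complex.ofReal_injective
  exact not_countable_Ici a (hc.mono hsub)

lemma exists_step (hT : Dense T) (L : List (ℂ × ℂ)) :
    ∃ p : ℂ × ℂ, Spec T u L p.1 p.2 := by
  have hδ := delta_pos L
  rcases Nat.even_or_odd L.length with he | ho
  · -- even step
    have he2 : L.length % 2 = 0 := Nat.even_iff.mp he
    have hne : ¬ (L.length % 2 = 1) := by omega
    set x := u (L.length / 2) with hx
    by_cases hp : poly L x = 0
    · exact ⟨(x, 0), by simp [hδ.le], fun _ => ⟨rfl, Or.inr ⟨hp, rfl⟩⟩, fun h => absurd h hne⟩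
    · have hpn : 0 < ‖poly L x‖ := norm_pos_iff.mpr hp
      obtain ⟨y, hyT, hyd⟩ := hT.exists_dist_lt (psum L x) (mul_pos hδ hpn)
      refine ⟨(x, (y - psum L x) / poly L x), ?_, fun _ => ⟨rfl, Or.inl ?_⟩,
        fun h => absurd h hne⟩
      · simp only
        rw [norm_div]
        rw [div_le_iff₀ hpn]
        have : ‖y - psum L x‖ = dist (psum L x) y := by
          rw [dist_comm, dist_eq_norm]
        rw [this]
        exact hyd.le
      · have : psum L x + (y - psum L x) / poly L x * poly L x = y := by
          field_simp
          ring
        rw [this]; exact hyT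
  · -- odd step
    have ho2 : L.length % 2 = 1 := Nat.odd_iff.mp ho
    have hne : ¬ (L.length % 2 = 0) := by omega
    obtain ⟨m, hm⟩ : ∃ m, L.length = m + 1 := by
      cases h : L.length with
      | zero => rw [h] at ho2; simp at ho2
      | succ m => exact ⟨m, rfl⟩
    have hLne : L ≠ [] := by intro h; rw [h] at hm; simp at hm
    set M := Mw L with hMdef
    have hM1 : 1 ≤ M := one_le_Mw hLne
    set δ := delta L with hδdef
    set P2 := (2:ℝ) ^ m with hP2def
    have hP2 : 1 ≤ P2 := one_le_pow₀ (by norm_num)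
    obtain ⟨t, ht, htu⟩ := exists_real_notin_range u
      (max (max (L.length : ℝ) (2 * M)) ((1 + M) * 2 ^ (2 * m + 2) / δ))
    have ht1 : (L.length : ℝ) ≤ t := le_trans (le_max_left _ _) (le_trans (le_max_left _ _) ht)
    have ht2 : 2 * M ≤ t := le_trans (le_max_right _ _) (le_trans (le_max_left _ _) ht)
    have ht3 : (1 + M) * 2 ^ (2 * m + 2) / δ ≤ t := le_trans (le_max_right _ _) ht
    have htpos : 1 ≤ t := by
      have : (1:ℝ) ≤ (L.length : ℝ) := by
        rw [hm]; push_cast; linarith [Nat.cast_nonneg (α := ℝ) m]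
      linarith
    have hk1 : (1 + M) * 2 ^ (2 * m + 2) ≤ δ * t := by
      rw [div_le_iff₀ hδ] at ht3; linarith [ht3]
    refine ⟨((t : ℂ), (δ : ℂ)), ?_, fun h => absurd h hne, fun _ => ⟨htu, t, rfl, ht1, ?_⟩⟩
    · simp only
      rw [Complex.norm_real, Real.norm_eq_abs, _root_.abs_of_nonneg hδ.le]
    · -- the growth estimate
      have hnx : ‖(t:ℂ)‖ = t := by
        rw [Complex.norm_real]; exact _root_.abs_of_nonneg (by linarith)
      have hA : ‖psum L (t:ℂ)‖ ≤ M * (t + M) ^ m := by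
        have := norm_psum_le L (t : ℂ)
        rw [hnx, hm] at this
        simpa using this
      have hB : (t - M) ^ (m + 1) ≤ ‖poly L (t:ℂ)‖ := by
        have := poly_lower L (t := t) (by linarith)
        rw [hm] at this; exact this
      have hC : δ * (t - M) ^ (m + 1) - M * (t + M) ^ m ≤ ‖psum L (t:ℂ) + (δ:ℂ) * poly L (t:ℂ)‖ := by
        have h1 : ‖(δ:ℂ) * poly L (t:ℂ)‖ = δ * ‖poly L (t:ℂ)‖ := by
          rw [norm_mul, Complex.norm_real, Real.norm_eq_abs, _root_.abs_of_nonneg hδ.le]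
        have h2 : ‖(δ:ℂ) * poly L (t:ℂ)‖ - ‖psum L (t:ℂ)‖ ≤ ‖psum L (t:ℂ) + (δ:ℂ) * poly L (t:ℂ)‖ := by
          have h := norm_sub_norm_le ((δ:ℂ) * poly L (t:ℂ)) (-(psum L (t:ℂ)))
          rw [norm_neg, sub_neg_eq_add, add_comm] at h
          exact h
        have h3 : δ * (t - M) ^ (m + 1) ≤ δ * ‖poly L (t:ℂ)‖ :=
          mul_le_mul_of_nonneg_left hB hδ.le
        rw [h1] at h2
        linarith
      -- arithmetic: t^m + M(t+M)^m ≤ δ(t-M)^(m+1)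
      have hu : (0:ℝ) ≤ t ^ m := pow_nonneg (by linarith) m
      have e1 : (t/2) ^ (m+1) ≤ (t - M) ^ (m+1) :=
        pow_le_pow_left₀ (by linarith) (by linarith) _
      have e2 : (t + M) ^ m ≤ P2 * t ^ m := by
        have : (t + M) ^ m ≤ (2*t) ^ m := pow_le_pow_left₀ (by linarith) (by linarith) _
        rw [mul_pow] at this
        rw [hP2def]
        exact this
      have hk1' : 4 * ((1 + M) * P2 ^ 2) ≤ δ * t := by
        have h2e : (2:ℝ) ^ (2*m+2) = 4 * P2 ^ 2 := by rw [hP2def]; ring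
        rw [h2e] at hk1
        linarith
      have hcoef : 2 * P2 * (1 + M * P2) ≤ δ * t := by nlinarith [sq_nonneg P2, sq_nonneg (P2 - 1)]
      have key2 : 2 * P2 * (1 + M * P2) * t ^ m ≤ δ * t * t ^ m :=
        mul_le_mul_of_nonneg_right hcoef hu
      have e5 : δ * (t/2) ^ (m+1) = δ * t * t ^ m / (2 * P2) := by
        rw [div_pow, pow_succ, pow_succ, hP2def]
        field_simp
      have hP2pos : (0:ℝ) < 2 * P2 := by linarith
      have key3 : (1 + M * P2) * t ^ m ≤ δ * (t/2) ^ (m+1) := by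
        rw [e5, le_div_iff₀ hP2pos]
        calc (1 + M * P2) * t ^ m * (2 * P2) = 2 * P2 * (1 + M * P2) * t ^ m := by ring
          _ ≤ δ * t * t ^ m := key2
      have hD : t ^ m + M * (t + M) ^ m ≤ δ * (t - M) ^ (m + 1) := by
        have e6 : M * (t + M) ^ m ≤ M * (P2 * t ^ m) :=
          mul_le_mul_of_nonneg_left e2 (by linarith)
        have e7 : δ * (t/2) ^ (m+1) ≤ δ * (t - M) ^ (m+1) :=
          mul_le_mul_of_nonneg_left e1 hδ.le
        nlinarith
      rw [hm]
      simp only [Nat.add_sub_cancel]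
      linarith

variable (hT : Dense T)

def step (L : List (ℂ × ℂ)) : ℂ × ℂ := Classical.choose (exists_step T u hT L)

lemma step_spec (L : List (ℂ × ℂ)) : Spec T u L (step T u hT L).1 (step T u hT L).2 :=
  Classical.choose_spec (exists_step T u hT L)

def hist : ℕ → List (ℂ × ℂ)
  | 0 => []
  | n + 1 => hist n ++ [step T u hT (hist n)]

def xx (n : ℕ) : ℂ := (step T u hT (hist T u hT n)).1

def cc (n : ℕ) : ℂ := (step T u hT (hist T u hT n)).2

lemma hist_succ (n : ℕ) :
    hist T u hT (n + 1) = hist T u hT n ++ [(xx T u hT n, cc T u hT n)] := by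
  rfl

lemma hist_length (n : ℕ) : (hist T u hT n).length = n := by
  induction n with
  | zero => rfl
  | succ n ih => rw [hist_succ, List.length_append, ih]; rfl

lemma mem_hist (p : ℂ × ℂ) (n : ℕ) :
    p ∈ hist T u hT n ↔ ∃ k < n, p = (xx T u hT k, cc T u hT k) := by
  induction n with
  | zero => simp [hist]
  | succ n ih =>
      rw [hist_succ, List.mem_append, ih]
      simp only [List.mem_singleton]
      constructor
      · rintro (⟨k, hk, rfl⟩ | rfl)
        · exact ⟨k, by omega, rfl⟩
        · exact ⟨n, by omega, rfl⟩
      · rintro ⟨k, hk, rfl⟩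
        rcases Nat.lt_succ_iff_lt_or_eq.mp hk with h | rfl
        · exact Or.inl ⟨k, h, rfl⟩
        · exact Or.inr rfl

lemma spec_n (n : ℕ) : Spec T u (hist T u hT n) (xx T u hT n) (cc T u hT n) :=
  step_spec T u hT (hist T u hT n)

/-- the entire function. -/
def ff (z : ℂ) : ℂ := ∑' n : ℕ, cc T u hT n * poly (hist T u hT n) z

lemma sum_range_eq (n : ℕ) (z : ℂ) :
    ∑ j ∈ Finset.range n, cc T u hT j * poly (hist T u hT j) z = psum (hist T u hT n) z := by
  induction n with
  | zero => simp [hist, psum]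
  | succ n ih => rw [Finset.sum_range_succ, ih, hist_succ, psum_append]

lemma poly_hist_eq_zero {k n : ℕ} (h : k < n) :
    poly (hist T u hT n) (xx T u hT k) = 0 := by
  rw [poly_eq_zero_iff]
  exact ⟨(xx T u hT k, cc T u hT k), (mem_hist T u hT _ n).mpr ⟨k, h, rfl⟩, rfl⟩

lemma ff_eval (k : ℕ) : ff T u hT (xx T u hT k) = psum (hist T u hT (k + 1)) (xx T u hT k) := by
  rw [ff, tsum_eq_sum (s := Finset.range (k + 1)), sum_range_eq]
  intro j hj
  rw [Finset.mem_range, not_lt] at hj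
  rw [poly_hist_eq_zero T u hT (by omega), mul_zero]

lemma ff_eval' (k : ℕ) : ff T u hT (xx T u hT k) =
    psum (hist T u hT k) (xx T u hT k) +
      cc T u hT k * poly (hist T u hT k) (xx T u hT k) := by
  rw [ff_eval, hist_succ, psum_append]

lemma even_in_T : ∀ n : ℕ, n % 2 = 0 → ff T u hT (xx T u hT n) ∈ T := by
  intro n
  induction n using Nat.strong_induction_on with
  | _ n ih =>
      intro hn
      have hs := (spec_n T u hT n).2.1 (by rwa [hist_length])
      rcases hs.2 with hmem | ⟨hpoly, hc⟩
      · rw [ff_eval']; exact hmem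
      · rw [poly_eq_zero_iff] at hpoly
        obtain ⟨p, hp, hpx⟩ := hpoly
        rw [mem_hist] at hp
        obtain ⟨j, hj, rfl⟩ := hp
        simp only at hpx
        have hxn : xx T u hT n = u (n / 2) := by
          have := hs.1; rwa [hist_length] at this
        have hjeven : j % 2 = 0 := by
          by_contra hodd
          have hspec := (spec_n T u hT j).2.2 (by rw [hist_length]; omega)
          exact hspec.1 ⟨n / 2, (hxn ▸ hpx).symm⟩
        rw [← hpx]
        exact ih j hj hjeven

lemma odd_growth (n : ℕ) (hn : n % 2 = 1) :
    ∃ t : ℝ, xx T u hT n = (t : ℂ) ∧ (n : ℝ) ≤ t ∧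
      t ^ (n - 1) ≤ ‖ff T u hT (xx T u hT n)‖ := by
  have hs := (spec_n T u hT n).2.2 (by rwa [hist_length])
  obtain ⟨t, hxt, htn, hgr⟩ := hs.2
  rw [hist_length] at hgr htn
  exact ⟨t, hxt, htn, by rw [ff_eval']; exact hgr⟩

lemma norm_cc_le (n : ℕ) : ‖cc T u hT n‖ ≤ delta (hist T u hT n) :=
  (spec_n T u hT n).1

lemma ff_differentiable : Differentiable ℂ (ff T u hT) := by
  intro z₀
  obtain ⟨R, hR⟩ := exists_nat_gt ‖z₀‖
  have hball : z₀ ∈ Metric.ball (0 : ℂ) R := by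
    simpa [Metric.mem_ball, dist_eq_norm] using hR
  set v : ℕ → ℝ := fun j => delta (hist T u hT j) * bnd (hist T u hT j) R with hv
  have hvnn : ∀ j, 0 ≤ v j := fun j =>
    le_of_lt (mul_pos (delta_pos _) (bnd_pos _ (Nat.cast_nonneg _)))
  have hvle : ∀ k : ℕ, R ≤ k → v k ≤ (2:ℝ)⁻¹ ^ k := by
    intro k hk
    have hbp : (0:ℝ) < bnd (hist T u hT k) k := bnd_pos _ (Nat.cast_nonneg _)
    have hb1 : bnd (hist T u hT k) R ≤ bnd (hist T u hT k) k :=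
      bnd_mono _ (Nat.cast_nonneg _) (by exact_mod_cast hk)
    have : v k = (2:ℝ)⁻¹ ^ k * (bnd (hist T u hT k) R / bnd (hist T u hT k) k) := by
      rw [hv]; simp only [delta, hist_length]; ring
    rw [this]
    have h1 : bnd (hist T u hT k) R / bnd (hist T u hT k) k ≤ 1 :=
      (div_le_one hbp).mpr hb1
    have h2 : (0:ℝ) ≤ (2:ℝ)⁻¹ ^ k := by positivity
    nlinarith
  have hgeo : Summable (fun j : ℕ => (2:ℝ)⁻¹ ^ (j + R)) := by
    simp_rw [pow_add]
    exact (summable_geometric_of_lt_one (by norm_num) (by norm_num)).mul_right _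
  have hvsum : Summable v := by
    rw [← summable_nat_add_iff R]
    exact Summable.of_nonneg_of_le (fun j => hvnn _)
      (fun j => hvle (j + R) (by omega)) hgeo
  have hdiff : DifferentiableOn ℂ (ff T u hT) (Metric.ball (0:ℂ) R) := by
    refine differentiableOn_tsum_of_summable_norm hvsum
      (fun j => ((differentiable_const _).mul (differentiable_poly _)).differentiableOn)
      Metric.isOpen_ball (fun j w hw => ?_)
    rw [Metric.mem_ball, dist_eq_norm, sub_zero] at hw
    rw [norm_mul]
    refine mul_le_mul (norm_cc_le T u hT j) ?_ (norm_nonneg _) (delta_pos _).le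
    exact (norm_poly_le _ _).trans (bnd_mono _ (norm_nonneg _) hw.le)
  exact hdiff.differentiableAt (Metric.isOpen_ball.mem_nhds hball)

end Construction

section Transcendence

open scoped Polynomial

/-- polynomial growth bound. -/
lemma poly_growth (q : Polynomial ℂ) : ∃ C : ℝ, 0 ≤ C ∧ ∀ t : ℝ, 1 ≤ t →
    ‖q.eval (t : ℂ)‖ ≤ C * t ^ q.natDegree := by
  refine ⟨∑ i ∈ Finset.range (q.natDegree + 1), ‖q.coeff i‖,
    Finset.sum_nonneg fun i _ => norm_nonneg _, fun t ht => ?_⟩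
  have heval : q.eval (t:ℂ) = ∑ i ∈ Finset.range (q.natDegree + 1), q.coeff i * (t:ℂ) ^ i :=
    q.eval_eq_sum_range (t:ℂ)
  rw [heval, Finset.sum_mul]
  refine (norm_sum_le _ _).trans (Finset.sum_le_sum fun i hi => ?_)
  rw [Finset.mem_range] at hi
  rw [norm_mul, norm_pow, Complex.norm_real, Real.norm_eq_abs,
    _root_.abs_of_nonneg (by linarith : (0:ℝ) ≤ t)]
  exact mul_le_mul_of_nonneg_left (pow_le_pow_right₀ ht (by omega)) (norm_nonneg _)

/-- eventual lower bound for a nonzero polynomial along the positive real axis. -/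
lemma poly_lower_bound (q : Polynomial ℂ) (hq : q ≠ 0) :
    ∃ c R₀ : ℝ, 0 < c ∧ ∀ t : ℝ, R₀ ≤ t → c ≤ ‖q.eval (t : ℂ)‖ := by
  rcases le_or_gt q.degree 0 with hd | hd
  · obtain ⟨a, rfl⟩ : ∃ a, q = Polynomial.C a := ⟨q.coeff 0, (Polynomial.eq_C_of_degree_le_zero hd)⟩
    have ha : a ≠ 0 := fun h => hq (by rw [h, map_zero])
    exact ⟨‖a‖, 0, norm_pos_iff.mpr ha, fun t _ => by simp⟩
  · have hz : Tendsto (fun t : ℝ => ‖(t : ℂ)‖) atTop atTop := by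
      simp only [Complex.norm_real, Real.norm_eq_abs]
      exact tendsto_abs_atTop_atTop
    have h := Polynomial.tendsto_norm_atTop q hd hz
    have h2 := (h.eventually_ge_atTop 1).exists_forall_of_atTop
    obtain ⟨R₀, hR₀⟩ := h2
    exact ⟨1, R₀, one_pos, fun t ht => hR₀ t ht⟩

/-- the 2-variable to iterated-polynomial algebra map. -/
def ψ : MvPolynomial (Fin 2) ℂ →ₐ[ℂ] Polynomial (Polynomial ℂ) :=
  MvPolynomial.aeval ![Polynomial.C Polynomial.X, Polynomial.X]

lemma eval_psi (a b : ℂ) (P : MvPolynomial (Fin 2) ℂ) :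
    Polynomial.eval₂ (Polynomial.evalRingHom a) b (ψ P) = MvPolynomial.eval ![a, b] P := by
  have h : (Polynomial.eval₂RingHom (Polynomial.evalRingHom a) b).comp
      (ψ.toRingHom) = (MvPolynomial.eval ![a, b]) := by
    apply MvPolynomial.ringHom_ext
    · intro r
      simp [ψ]
    · intro i
      fin_cases i <;> simp [ψ]
  exact DFunLike.congr_fun h P

lemma not_algebraic (g : ℂ → ℂ)
    (hgrow : ∀ N : ℕ, ∃ t : ℝ, (N : ℝ) ≤ t ∧ t ^ N ≤ ‖g (t : ℂ)‖) :
    ¬ ∃ P : MvPolynomial (Fin 2) ℂ, P ≠ 0 ∧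
        ∀ z : ℂ, MvPolynomial.aeval ![z, g z] P = 0 := by
  rintro ⟨P, hP0, hPz⟩
  set Q : Polynomial (Polynomial ℂ) := ψ P with hQ
  have haeval : ∀ v : Fin 2 → ℂ, MvPolynomial.aeval v P = MvPolynomial.eval v P := by
    intro v
    have := MvPolynomial.coe_aeval_eq_eval (f := v)
    exact DFunLike.congr_fun this P
  have hkey : ∀ z : ℂ, Polynomial.eval₂ (Polynomial.evalRingHom z) (g z) Q = 0 := by
    intro z
    rw [hQ, eval_psi, ← haeval, hPz z]
  have hQ0 : Q ≠ 0 := by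
    intro h0
    apply hP0
    apply MvPolynomial.funext
    intro x
    have hx : x = ![x 0, x 1] := by
      funext i; fin_cases i <;> rfl
    rw [map_zero, hx, ← eval_psi (x 0) (x 1) P, ← hQ, h0]
    simp
  set d := Q.natDegree with hd
  have hsum : ∀ z : ℂ, ∑ i ∈ Finset.range (d + 1),
      (Q.coeff i).eval z * (g z) ^ i = 0 := by
    intro z
    have := hkey z
    rwa [Polynomial.eval₂_eq_sum_range] at this
  rcases Nat.eq_zero_or_pos d with hd0 | hd1
  · -- degree 0 : Q is a nonzero "constant" polynomial that vanishes identically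
    apply hQ0
    have hcoeff : Q.coeff 0 = 0 := by
      apply Polynomial.funext
      intro r
      have := hsum r
      rw [hd0] at this
      simpa using this
    have hQC : Q = Polynomial.C (Q.coeff 0) :=
      Polynomial.eq_C_of_natDegree_eq_zero (by rw [← hd]; exact hd0)
    rw [hQC, hcoeff, map_zero]
  · obtain ⟨e, he⟩ : ∃ e, d = e + 1 := ⟨d - 1, by omega⟩
    have hqd : Q.coeff d ≠ 0 := by
      rw [hd, ← Polynomial.leadingCoeff]
      exact Polynomial.leadingCoeff_ne_zero.mpr hQ0
    obtain ⟨c, R₀, hc, hlow⟩ := poly_lower_bound (Q.coeff d) hqd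
    -- uniform growth constants for the lower coefficients
    set m : ℕ := ∑ i ∈ Finset.range d, (Q.coeff i).natDegree with hm
    have hCex : ∃ C : ℝ, 0 ≤ C ∧ ∀ t : ℝ, 1 ≤ t →
        ∑ i ∈ Finset.range d, ‖(Q.coeff i).eval (t:ℂ)‖ ≤ C * t ^ m := by
      choose Ci hCi0 hCi using fun i => poly_growth (Q.coeff i)
      refine ⟨∑ i ∈ Finset.range d, Ci i, Finset.sum_nonneg fun i _ => hCi0 _,
        fun t ht => ?_⟩
      rw [Finset.sum_mul]
      refine Finset.sum_le_sum fun i hi => ?_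
      refine (hCi i t ht).trans ?_
      refine mul_le_mul_of_nonneg_left (pow_le_pow_right₀ ht ?_) (hCi0 _)
      rw [Finset.mem_range] at hi
      exact Finset.single_le_sum (f := fun i => (Q.coeff i).natDegree)
        (fun j _ => Nat.zero_le _) (Finset.mem_range.mpr hi)
    obtain ⟨C, hC0, hCbound⟩ := hCex
    -- choose a large N and a witness t
    obtain ⟨K, hK⟩ := exists_nat_ge (max (C / c) (max R₀ 1))
    set N := m + K + 2 with hN
    obtain ⟨t, htN, htg⟩ := hgrow N
    have hKN : (K : ℝ) + 2 ≤ (N : ℝ) := by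
      rw [hN]; push_cast; linarith [Nat.cast_nonneg (α := ℝ) m]
    have ht1 : (1:ℝ) ≤ t := by
      have : (1:ℝ) ≤ (K:ℝ) + 2 := by linarith [Nat.cast_nonneg (α := ℝ) K]
      linarith
    have htR₀ : R₀ ≤ t := by
      have h1 : R₀ ≤ (K:ℝ) := le_trans (le_trans (le_max_left _ _) (le_max_right _ _)) hK
      linarith
    have htCc : C / c < t := by
      have h1 : C / c ≤ (K:ℝ) := le_trans (le_max_left _ _) hK
      linarith
    set w := g (t : ℂ) with hw
    have hwlarge : t ^ N ≤ ‖w‖ := htg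
    have htNlarge : t * t ^ m ≤ t ^ N := by
      calc t * t ^ m = t ^ (m + 1) := (pow_succ' t m).symm
        _ ≤ t ^ N := pow_le_pow_right₀ ht1 (by omega)
    have hw1 : 1 ≤ ‖w‖ := by
      have h2 : (1:ℝ) ≤ t * t ^ m :=
        one_le_mul_of_one_le_of_one_le ht1 (one_le_pow₀ ht1)
      linarith
    -- the algebraic identity at z = t
    have hid : (Q.coeff d).eval (t:ℂ) * w ^ d =
        -∑ i ∈ Finset.range d, (Q.coeff i).eval (t:ℂ) * w ^ i := by
      have := hsum (t : ℂ)
      rw [Finset.sum_range_succ] at this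
      linear_combination this
    have hnorm : c * ‖w‖ ^ d ≤ C * t ^ m * ‖w‖ ^ e := by
      calc c * ‖w‖ ^ d ≤ ‖(Q.coeff d).eval (t:ℂ)‖ * ‖w‖ ^ d := by
            refine mul_le_mul_of_nonneg_right (hlow t htR₀) (by positivity)
        _ = ‖(Q.coeff d).eval (t:ℂ) * w ^ d‖ := by rw [norm_mul, norm_pow]
        _ = ‖∑ i ∈ Finset.range d, (Q.coeff i).eval (t:ℂ) * w ^ i‖ := by
            rw [hid, norm_neg]
        _ ≤ ∑ i ∈ Finset.range d, ‖(Q.coeff i).eval (t:ℂ)‖ * ‖w‖ ^ i := by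
            refine (norm_sum_le _ _).trans (Finset.sum_le_sum fun i _ => ?_)
            rw [norm_mul, norm_pow]
        _ ≤ ∑ i ∈ Finset.range d, ‖(Q.coeff i).eval (t:ℂ)‖ * ‖w‖ ^ e := by
            refine Finset.sum_le_sum fun i hi => ?_
            refine mul_le_mul_of_nonneg_left (pow_le_pow_right₀ hw1 ?_) (norm_nonneg _)
            rw [Finset.mem_range] at hi; omega
        _ = (∑ i ∈ Finset.range d, ‖(Q.coeff i).eval (t:ℂ)‖) * ‖w‖ ^ e := by
            rw [Finset.sum_mul]
        _ ≤ C * t ^ m * ‖w‖ ^ e :=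
            mul_le_mul_of_nonneg_right (hCbound t ht1) (by positivity)
    have hwe : (0:ℝ) < ‖w‖ ^ e := by positivity
    have hcw : c * ‖w‖ ≤ C * t ^ m := by
      have : c * ‖w‖ * ‖w‖ ^ e ≤ C * t ^ m * ‖w‖ ^ e := by
        calc c * ‖w‖ * ‖w‖ ^ e = c * ‖w‖ ^ d := by rw [he, pow_succ]; ring
          _ ≤ C * t ^ m * ‖w‖ ^ e := hnorm
      exact le_of_mul_le_mul_right this hwe
    have htm : (0:ℝ) < t ^ m := by positivity
    have hct : c * t ≤ C := by
      have h1 : c * (t * t ^ m) ≤ c * ‖w‖ :=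
        mul_le_mul_of_nonneg_left (le_trans htNlarge hwlarge) hc.le
      have h2 : c * t * t ^ m ≤ C * t ^ m := by
        calc c * t * t ^ m = c * (t * t ^ m) := by ring
          _ ≤ C * t ^ m := le_trans h1 hcw
      exact le_of_mul_le_mul_right h2 htm
    have : t ≤ C / c := (le_div_iff₀ hc).mpr (by linarith)
    linarith

end Transcendence

end

end Stackel

/-- Stäckel's theorem: for any countable `A ⊆ ℂ` and any dense `T ⊆ ℂ`, there is a
transcendental entire function `f` with `f(A) ⊆ T`.  Here `f` is transcendental means
that there is no nonzero two-variable polynomial `P` with complex coefficients such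
that `P(z, f(z)) = 0` for all `z`. -/
theorem stackel (A T : Set ℂ) (hA : A.Countable) (hT : Dense T) :
    ∃ f : ℂ → ℂ, Differentiable ℂ f ∧
      (¬ ∃ P : MvPolynomial (Fin 2) ℂ, P ≠ 0 ∧
        ∀ z : ℂ, MvPolynomial.aeval ![z, f z] P = 0) ∧
      f '' A ⊆ T := by
  obtain ⟨u, hu⟩ := (hA.insert 0).exists_eq_range (Set.insert_nonempty _ _)
  refine ⟨Stackel.ff T u hT, Stackel.ff_differentiable T u hT, ?_, ?_⟩
  · refine Stackel.not_algebraic _ (fun N => ?_)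
    obtain ⟨t, hxt, htn, hgr⟩ := Stackel.odd_growth T u hT (2 * N + 1) (by omega)
    have ht1 : (1:ℝ) ≤ t := by
      have : ((2 * N + 1 : ℕ) : ℝ) ≥ 1 := by push_cast; linarith [Nat.cast_nonneg (α := ℝ) N]
      linarith
    refine ⟨t, ?_, ?_⟩
    · have : (N : ℝ) ≤ ((2 * N + 1 : ℕ) : ℝ) := by push_cast; linarith [Nat.cast_nonneg (α := ℝ) N]
      linarith
    · rw [← hxt]
      refine le_trans (pow_le_pow_right₀ ht1 (by omega)) hgr
  · rintro y ⟨a, haA, rfl⟩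
    have : a ∈ Set.range u := by rw [← hu]; exact Set.mem_insert_of_mem _ haA
    obtain ⟨k, hk⟩ := this
    have hxx : Stackel.xx T u hT (2 * k) = a := by
      have hs := (Stackel.spec_n T u hT (2 * k)).2.1 (by rw [Stackel.hist_length]; omega)
      have := hs.1
      rw [Stackel.hist_length] at this
      rw [this]
      have : (2 * k) / 2 = k := by omega
      rw [this, hk]
    have := Stackel.even_in_T T u hT (2 * k) (by omega)
    rwa [hxx] at this
end

section
/- If α₁, …, αₙ are complex numbers algebraic over ℚ which are linearly independent over ℚ, then the numbers e^{α₁}, …, e^{αₙ} are algebraically independent over ℚ. -/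
open Polynomial Complex

-- derivative relation
example (f : ℂ[X]) : derivative (sumIDeriv f) = sumIDeriv f - f := by
  have := sumIDeriv_eq_self_add f
  linear_combination -this

theorem I_bound (f : ℂ[X]) (s : ℂ) (B : ℝ)
    (hB : ∀ t ∈ Set.Icc (0:ℝ) 1, ‖f.eval (t • s)‖ ≤ B) :
    ‖exp s * (sumIDeriv f).eval 0 - (sumIDeriv f).eval s‖ ≤ ‖s‖ * Real.exp ‖s‖ * B := by
  set S : ℂ[X] := sumIDeriv f with hS
  have hd : derivative S = S - f := by
    have := sumIDeriv_eq_self_add f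
    rw [hS]; linear_combination -this
  -- G : ℂ → ℂ
  set G : ℂ → ℂ := fun z => exp (s - z * s) * S.eval (z * s) with hG
  have hG' : ∀ z : ℂ, HasDerivAt G (-s * exp (s - z * s) * S.eval (z * s)
      + exp (s - z * s) * ((derivative S).eval (z * s) * s)) z := by
    intro z
    have h1 : HasDerivAt (fun z : ℂ => s - z * s) (-s) z := by
      simpa using ((hasDerivAt_id z).mul_const s).const_sub s
    have h2 : HasDerivAt (fun z : ℂ => exp (s - z * s)) (exp (s - z * s) * (-s)) z :=
      (Complex.hasDerivAt_exp _).comp z h1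
    have h3 : HasDerivAt (fun z : ℂ => z * s) s z := by simpa using (hasDerivAt_id z).mul_const s
    have h4 : HasDerivAt (fun z : ℂ => S.eval (z * s)) ((derivative S).eval (z * s) * s) z :=
      by have := (S.hasDerivAt (z * s)).comp z h3; exact this
    have := h2.mul h4
    exact this.congr_deriv (by ring)
  have key : ∀ z : ℂ, HasDerivAt G (-(s * exp (s - z * s) * f.eval (z * s))) z := by
    intro z
    convert hG' z using 1
    rw [hd]
    simp only [eval_sub]
    ring
  have hIcc : ∀ t ∈ Set.Icc (0:ℝ) 1,
      HasDerivWithinAt (fun t : ℝ => G t) (-(s * exp (s - t * s) * f.eval (t * s))) (Set.Icc 0 1) t := by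
    intro t _
    exact ((key t).comp_ofReal).hasDerivWithinAt
  have hbound : ∀ t ∈ Set.Ico (0:ℝ) 1,
      ‖-(s * exp (s - (t:ℂ) * s) * f.eval ((t:ℂ) * s))‖ ≤ ‖s‖ * Real.exp ‖s‖ * B := by
    intro t ht
    rw [norm_neg, norm_mul, norm_mul]
    have h1 : ‖exp (s - (t:ℂ) * s)‖ ≤ Real.exp ‖s‖ := by
      rw [Complex.norm_exp]
      apply Real.exp_le_exp.2
      calc (s - (t:ℂ) * s).re ≤ ‖s - (t:ℂ) * s‖ := Complex.re_le_norm _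
        _ = ‖(1 - (t:ℂ)) * s‖ := by ring_nf
        _ = ‖(1 - (t:ℂ))‖ * ‖s‖ := norm_mul _ _
        _ ≤ 1 * ‖s‖ := by
            apply mul_le_mul_of_nonneg_right _ (norm_nonneg s)
            rw [show (1 - (t:ℂ)) = ((1 - t : ℝ) : ℂ) by push_cast; ring]
            rw [Complex.norm_real]
            rw [Real.norm_eq_abs, abs_le]
            constructor <;> [linarith [ht.2]; linarith [ht.1]]
        _ = ‖s‖ := one_mul _
    have h2 : ‖f.eval ((t:ℂ) * s)‖ ≤ B := by
      have := hB t ⟨ht.1, ht.2.le⟩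
      rwa [show t • s = (t:ℂ) * s from Complex.real_smul] at this
    have hBnn : (0:ℝ) ≤ B := le_trans (norm_nonneg _) (hB 0 ⟨le_refl 0, zero_le_one⟩)
    calc ‖s‖ * ‖exp (s - (t:ℂ) * s)‖ * ‖f.eval ((t:ℂ) * s)‖
        ≤ ‖s‖ * Real.exp ‖s‖ * ‖f.eval ((t:ℂ) * s)‖ := by
          apply mul_le_mul_of_nonneg_right _ (norm_nonneg _)
          exact mul_le_mul_of_nonneg_left h1 (norm_nonneg s)
      _ ≤ ‖s‖ * Real.exp ‖s‖ * B := by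
          apply mul_le_mul_of_nonneg_left h2
          positivity
  have := norm_image_sub_le_of_norm_deriv_le_segment' hIcc hbound 1 ⟨zero_le_one, le_refl 1⟩
  have hG1 : G (1:ℝ) = S.eval s := by
    simp only [hG]
    push_cast
    rw [one_mul, sub_self, Complex.exp_zero, one_mul]
  have hG0 : G (0:ℝ) = exp s * S.eval 0 := by
    simp only [hG]
    push_cast
    rw [zero_mul, sub_zero]
  rw [hG1, hG0] at this
  rw [norm_sub_rev]
  linarith [this]

theorem I_bound' (f : ℂ[X]) (s : ℂ) (B : ℝ)
    (hB : ∀ t ∈ Set.Icc (0:ℝ) 1, ‖f.eval (t • s)‖ ≤ B) :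
    True := trivial
open Polynomial Complex
open scoped Nat

theorem eval_norm_le (Q : ℂ[X]) (z : ℂ) :
    ‖Q.eval z‖ ≤ ∑ j ∈ Finset.range (Q.natDegree + 1), ‖Q.coeff j‖ * ‖z‖ ^ j := by
  rw [eval_eq_sum_range]
  refine (norm_sum_le _ _).trans (Finset.sum_le_sum fun j _ => ?_)
  rw [norm_mul, norm_pow]

theorem exp_polynomial_approx (P : ℤ[X]) (hP : P.eval 0 ≠ 0) :
    ∃ c : ℝ, 0 ≤ c ∧ ∀ p : ℕ, p.Prime → (P.eval 0).natAbs < p →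
    ∃ n : ℤ, ¬ (p:ℤ) ∣ n ∧ ∃ gp : ℤ[X], gp.natDegree ≤ p * (P.natDegree + 1) ∧
    ∀ γ ∈ P.aroots ℂ, ‖(n:ℂ) * Complex.exp γ - (p:ℂ) * (aeval γ gp)‖
      ≤ c ^ p / ((p-1)! : ℝ) := by -- note
  have hP0 : P ≠ 0 := fun h => hP (by simp [h])
  set RA : ℝ := ((P.aroots ℂ).map (fun γ => ‖γ‖)).sum + 1 with hRA
  have hRA1 : 1 ≤ RA := by
    have : (0:ℝ) ≤ ((P.aroots ℂ).map (fun γ => ‖γ‖)).sum :=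
      Multiset.sum_nonneg (by simp only [Multiset.mem_map]; rintro _ ⟨γ, _, rfl⟩; positivity)
    simp only [hRA]; linarith
  have hroot_le : ∀ γ ∈ P.aroots ℂ, ‖γ‖ ≤ RA := by
    intro γ hγ
    have : ‖γ‖ ≤ ((P.aroots ℂ).map (fun γ => ‖γ‖)).sum :=
      Multiset.single_le_sum (by simp only [Multiset.mem_map]; rintro _ ⟨x, _, rfl⟩; positivity) _
        (Multiset.mem_map_of_mem _ hγ)
    simp only [hRA]; linarith
  set RB : ℝ := (∑ j ∈ Finset.range (P.natDegree + 1), ‖((P.coeff j : ℤ) : ℂ)‖ * RA ^ j) + 1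
    with hRB
  have hRB1 : 1 ≤ RB := by
    have : (0:ℝ) ≤ ∑ j ∈ Finset.range (P.natDegree + 1), ‖((P.coeff j : ℤ) : ℂ)‖ * RA ^ j := by
      apply Finset.sum_nonneg; intro j _; positivity
    simp only [hRB]; linarith
  have hPeval : ∀ z : ℂ, ‖z‖ ≤ RA → ‖(P.map (algebraMap ℤ ℂ)).eval z‖ ≤ RB := by
    intro z hz
    refine (eval_norm_le _ z).trans ?_
    have h1 : ∑ j ∈ Finset.range ((P.map (algebraMap ℤ ℂ)).natDegree + 1),
        ‖(P.map (algebraMap ℤ ℂ)).coeff j‖ * ‖z‖ ^ j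
        ≤ ∑ j ∈ Finset.range (P.natDegree + 1), ‖(P.map (algebraMap ℤ ℂ)).coeff j‖ * ‖z‖ ^ j := by
      apply Finset.sum_le_sum_of_subset_of_nonneg
      · refine Finset.range_subset_range.2 ?_
        have := Polynomial.natDegree_map_le (f := algebraMap ℤ ℂ) (p := P); omega
      · intro _ _ _; positivity
    have h2 : ∑ j ∈ Finset.range (P.natDegree + 1), ‖(P.map (algebraMap ℤ ℂ)).coeff j‖ * ‖z‖ ^ j
        ≤ ∑ j ∈ Finset.range (P.natDegree + 1), ‖((P.coeff j : ℤ) : ℂ)‖ * RA ^ j := by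
      apply Finset.sum_le_sum
      intro j _
      rw [coeff_map]
      apply mul_le_mul_of_nonneg_left _ (norm_nonneg _)
      exact pow_le_pow_left₀ (norm_nonneg z) hz j
    simp only [hRB]; linarith
  clear_value RA RB
  clear hRA hRB
  refine ⟨RA * RB * Real.exp RA, by positivity, fun p hp hp2 => ?_⟩
  have hp0 : 0 < p := hp.pos
  -- the polynomial f
  set f : ℤ[X] := X ^ (p - 1) * P ^ p with hf
  -- n
  obtain ⟨gp₀, -, h₀⟩ := Polynomial.aeval_sumIDeriv_of_pos (A := ℤ) f hp0
    (fun a b h => by simpa using h)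
  have halg : algebraMap ℤ ℤ = RingHom.id ℤ := by ext x; simp
  have hmap_id : f.map (algebraMap ℤ ℤ) = (X - C 0) ^ (p - 1) * P ^ p := by
    rw [halg, Polynomial.map_id, hf]
    simp
  set n : ℤ := (P.eval 0) ^ p + p * (aeval (0:ℤ) gp₀) with hn
  have hfact : p * (p-1)! = p ! := Nat.mul_factorial_pred hp0.ne'
  have hS0 : aeval (0:ℤ) (sumIDeriv f) = ((p-1)! : ℤ) * n := by
    rw [h₀ 0 hmap_id, hn]
    simp only [nsmul_eq_mul, eval_pow]
    have : ((p ! : ℕ) : ℤ) = (p : ℤ) * ((p-1)! : ℤ) := by exact_mod_cast hfact.symm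
    rw [this]; ring
  have hndvd : ¬ (p:ℤ) ∣ n := by
    intro hdvd
    have h1 : (p:ℤ) ∣ (P.eval 0) ^ p := by
      have h' : (p:ℤ) ∣ (p:ℤ) * (aeval (0:ℤ) gp₀) := dvd_mul_right _ _
      have h'' := dvd_sub hdvd h'
      rw [hn] at h''
      simpa using h''
    have h2 : (p:ℤ) ∣ P.eval 0 := Int.Prime.dvd_pow' hp h1
    have h3 : p ∣ (P.eval 0).natAbs := by
      simpa using Int.natAbs_dvd_natAbs.mpr h2
    have h4 : (P.eval 0).natAbs ≠ 0 := fun h => hP (Int.natAbs_eq_zero.mp h)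
    exact absurd (Nat.le_of_dvd (Nat.pos_of_ne_zero h4) h3) (by omega)
  obtain ⟨gp, gp_le, h₁⟩ := Polynomial.aeval_sumIDeriv (A := ℂ) f p
  have hdeg : gp.natDegree ≤ p * (P.natDegree + 1) := by
    refine gp_le.trans ?_
    have h5 : f.natDegree ≤ (p - 1) + p * P.natDegree := by
      refine (natDegree_mul_le).trans ?_
      have h6 : (X ^ (p-1) : ℤ[X]).natDegree = p - 1 := natDegree_X_pow _
      have h7 : (P ^ p).natDegree ≤ p * P.natDegree := (natDegree_pow P p).le
      omega
    have h8 : p * (P.natDegree + 1) = p * P.natDegree + p := by ring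
    omega
  refine ⟨n, hndvd, gp, hdeg, fun γ hγ => ?_⟩
  have hinj : Function.Injective (algebraMap ℤ ℂ) := (algebraMap ℤ ℂ).injective_int
  have hmapP : P.map (algebraMap ℤ ℂ) ≠ 0 :=
    (Polynomial.map_ne_zero_iff hinj).mpr hP0
  have hroot : (P.map (algebraMap ℤ ℂ)).IsRoot γ := by
    rw [aroots_def] at hγ
    exact isRoot_of_mem_roots hγ
  obtain ⟨Q, hQ⟩ := (dvd_iff_isRoot.2 hroot)
  have hfγ : f.map (algebraMap ℤ ℂ) = (X - C γ) ^ p * (X ^ (p-1) * Q ^ p) := by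
    rw [hf, Polynomial.map_mul, Polynomial.map_pow, Polynomial.map_pow, Polynomial.map_X, hQ,
      mul_pow]
    ring
  have hIγ := h₁ γ ⟨_, hfγ⟩
  -- pass to the mapped polynomial
  set fC : ℂ[X] := f.map (algebraMap ℤ ℂ) with hfC
  have keyγ : (sumIDeriv fC).eval γ = aeval γ (sumIDeriv f) := by
    rw [hfC, sumIDeriv_map, aeval_def, eval₂_eq_eval_map]
  have hS0' : (sumIDeriv f).eval 0 = ((p-1)! : ℤ) * n := by
    rw [← hS0, aeval_def, eval₂_eq_eval_map, halg, Polynomial.map_id]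
  have key0 : (sumIDeriv fC).eval 0 = ((p-1)! : ℂ) * (n : ℂ) := by
    rw [hfC, sumIDeriv_map, ← coeff_zero_eq_eval_zero, coeff_map,
      coeff_zero_eq_eval_zero, hS0']
    norm_cast
  have hBnd : ∀ t ∈ Set.Icc (0:ℝ) 1, ‖fC.eval (t • γ)‖ ≤ RA ^ (p-1) * RB ^ p := by
    intro t ht
    have htγ : ‖t • γ‖ ≤ RA := by
      rw [norm_smul]
      have : ‖t‖ ≤ 1 := by
        rw [Real.norm_eq_abs, abs_le]; exact ⟨by linarith [ht.1], ht.2⟩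
      calc ‖t‖ * ‖γ‖ ≤ 1 * ‖γ‖ :=
            mul_le_mul_of_nonneg_right this (norm_nonneg _)
        _ = ‖γ‖ := one_mul _
        _ ≤ RA := hroot_le γ hγ
    have : fC.eval (t • γ) = (t • γ) ^ (p-1) * ((P.map (algebraMap ℤ ℂ)).eval (t • γ)) ^ p := by
      rw [hfC, hf, Polynomial.map_mul, Polynomial.map_pow, Polynomial.map_pow, Polynomial.map_X,
        eval_mul, eval_pow, eval_pow, eval_X]
    rw [this, norm_mul, norm_pow, norm_pow]
    have h7 : ‖t • γ‖ ^ (p-1) ≤ RA ^ (p-1) := pow_le_pow_left₀ (norm_nonneg _) htγ _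
    have h8 : ‖(P.map (algebraMap ℤ ℂ)).eval (t • γ)‖ ^ p ≤ RB ^ p :=
      pow_le_pow_left₀ (norm_nonneg _) (hPeval _ htγ) _
    exact mul_le_mul h7 h8 (by positivity) (by positivity)
  have hIb := I_bound fC γ (RA ^ (p-1) * RB ^ p) hBnd
  have hfactC : (p ! : ℂ) = ((p-1)! : ℂ) * (p : ℂ) := by
    rw [← hfact]; push_cast; ring
  have hfacR : (0:ℝ) < ((p-1)! : ℝ) := by exact_mod_cast Nat.factorial_pos (p-1)
  rw [le_div_iff₀ hfacR]
  have hnorm_eq : ‖(n:ℂ) * Complex.exp γ - (p:ℂ) * (aeval γ gp)‖ * ((p-1)! : ℝ)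
      = ‖Complex.exp γ * (sumIDeriv fC).eval 0 - (sumIDeriv fC).eval γ‖ := by
    rw [key0, keyγ, hIγ, nsmul_eq_mul, hfactC]
    rw [show ((p-1)! : ℝ) = ‖((p-1)! : ℂ)‖ by rw [Complex.norm_natCast], ← norm_mul]
    congr 1
    ring
  rw [hnorm_eq]
  refine hIb.trans ?_
  have hexpγ : Real.exp ‖γ‖ ≤ Real.exp RA := Real.exp_le_exp.2 (hroot_le γ hγ)
  have h9 : ‖γ‖ * Real.exp ‖γ‖ * (RA ^ (p-1) * RB ^ p)
      ≤ RA * Real.exp RA * (RA ^ (p-1) * RB ^ p) := by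
    have := mul_le_mul (hroot_le γ hγ) hexpγ (Real.exp_pos _).le (by linarith)
    exact mul_le_mul_of_nonneg_right this (by positivity)
  refine h9.trans ?_
  have hRApow : RA * RA ^ (p-1) = RA ^ p := by
    rw [← pow_succ']
    congr 1
    omega
  have hexp1 : (1:ℝ) ≤ Real.exp RA := Real.one_le_exp (by linarith)
  calc RA * Real.exp RA * (RA ^ (p-1) * RB ^ p)
      = (RA * RA ^ (p-1)) * RB ^ p * Real.exp RA := by ring
    _ = RA ^ p * RB ^ p * Real.exp RA := by rw [hRApow]
    _ ≤ RA ^ p * RB ^ p * (Real.exp RA) ^ p := by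
        refine mul_le_mul_of_nonneg_left (le_self_pow₀ hexp1 hp0.ne') (by positivity)
    _ = (RA * RB * Real.exp RA) ^ p := by rw [mul_pow, mul_pow]

theorem int_aeval_integral (γ : ℂ) (d : ℤ) (hd : IsIntegral ℤ ((d:ℂ) * γ)) (g : ℤ[X])
    (E : ℕ) (hdeg : g.natDegree ≤ E) : IsIntegral ℤ ((d:ℂ) ^ E * aeval γ g) := by
  rw [aeval_eq_sum_range' (Nat.lt_succ_of_le hdeg) γ, Finset.mul_sum]
  refine IsIntegral.sum _ fun j hj => ?_
  rw [Finset.mem_range, Nat.lt_succ_iff] at hj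
  have key : (d:ℂ) ^ E * (g.coeff j • γ ^ j) = g.coeff j • ((d:ℂ) ^ (E - j) * ((d:ℂ) * γ) ^ j) := by
    rw [zsmul_eq_mul, zsmul_eq_mul, mul_pow]
    rw [show (d:ℂ)^E = (d:ℂ)^(E-j) * (d:ℂ)^j by rw [← pow_add, Nat.sub_add_cancel hj]]
    ring
  rw [key]
  refine IsIntegral.smul _ (IsIntegral.mul ?_ (hd.pow j))
  have : ((d:ℂ) ^ (E - j)) = algebraMap ℤ ℂ (d ^ (E - j)) := by simp
  rw [this]
  exact isIntegral_algebraMap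

theorem exists_prime_mul_pow_div_factorial_lt_one' (n : ℕ) (a c : ℝ) :
    ∃ p > n, p.Prime ∧ a * c ^ p / ((p - 1)! : ℝ) < 1 := by
  obtain ⟨m, hm⟩ := Filter.eventually_atTop.1
    ((FloorSemiring.tendsto_mul_pow_div_factorial_sub_atTop a c 1).eventually (gt_mem_nhds one_pos))
  obtain ⟨p, hp1, hp2⟩ := Nat.exists_infinite_primes (max (n + 1) m)
  exact ⟨p, lt_of_lt_of_le (Nat.lt_succ_self n) (le_of_max_le_left hp1), hp2,
    hm p (le_of_max_le_right hp1)⟩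

theorem core_lemma (E : Type) [Field E] [Algebra ℚ E] [FiniteDimensional ℚ E] [IsGalois ℚ E]
    (Φ : E →ₐ[ℚ] ℂ) (C : E →₀ ℤ) (h0 : C 0 ≠ 0)
    (hequi : ∀ (τ : E ≃ₐ[ℚ] E) (x : E), C (τ x) = C x)
    (hsum : (C.sum fun x m => (m : ℂ) * Complex.exp (Φ x)) = 0) : False := by
  classical
  set S : Finset E := C.support.erase 0 with hS
  have hSmem : ∀ x ∈ S, C x ≠ 0 ∧ x ≠ 0 := by
    intro x hx
    rw [hS, Finset.mem_erase, Finsupp.mem_support_iff] at hx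
    exact ⟨hx.2, hx.1⟩
  have hSstable : ∀ (τ : E ≃ₐ[ℚ] E) (x : E), x ∈ S → τ x ∈ S := by
    intro τ x hx
    obtain ⟨h1, h2⟩ := hSmem x hx
    rw [hS, Finset.mem_erase, Finsupp.mem_support_iff]
    refine ⟨fun h => h2 (by simpa using τ.injective (by simpa using h)), by rwa [hequi]⟩
  -- the basic sum identity
  have hsum' : (C 0 : ℂ) + ∑ x ∈ S, (C x : ℂ) * Complex.exp (Φ x) = 0 := by
    rw [← hsum, Finsupp.sum]
    rw [show C.support = insert 0 S from (Finset.insert_erase (Finsupp.mem_support_iff.2 h0)).symm]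
    rw [Finset.sum_insert (Finset.notMem_erase _ _)]
    simp
    rfl
  -- integrality of elements of S
  have hint : ∀ x ∈ S, IsIntegral ℚ x := fun x _ => IsIntegral.of_finite ℚ x
  -- the rational polynomial with the right roots
  set Q : ℚ[X] := ∏ x ∈ S, minpoly ℚ x with hQ
  have hQx : ∀ x ∈ S, minpoly ℚ x ≠ 0 := fun x hx => minpoly.ne_zero (hint x hx)
  have hQne : Q ≠ 0 := Finset.prod_ne_zero_iff.2 hQx
  have hQ0 : Q.eval 0 ≠ 0 := by
    rw [hQ, eval_prod]
    refine Finset.prod_ne_zero_iff.2 fun x hx => ?_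
    rw [← coeff_zero_eq_eval_zero]
    exact minpoly.coeff_zero_ne_zero (hint x hx) (hSmem x hx).2
  -- integer normalization
  obtain ⟨b, hb⟩ := IsLocalization.integerNormalization_map_to_map (nonZeroDivisors ℤ) Q
  set P : ℤ[X] := IsLocalization.integerNormalization (nonZeroDivisors ℤ) Q with hPdef
  have hb0 : (b : ℤ) ≠ 0 := nonZeroDivisors.coe_ne_zero b
  have hP0 : P.eval 0 ≠ 0 := by
    intro h
    have h1 : (P.map (algebraMap ℤ ℚ)).eval 0 = 0 := by
      rw [← coeff_zero_eq_eval_zero, coeff_map, coeff_zero_eq_eval_zero, h, map_zero]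
    rw [hb] at h1
    rw [eval_smul] at h1
    have : ((b : ℤ) : ℚ) ≠ 0 := Int.cast_ne_zero.2 hb0
    simp only [zsmul_eq_mul, mul_eq_zero] at h1
    tauto
  -- roots
  have hroots : ∀ x ∈ S, Φ x ∈ P.aroots ℂ := by
    intro x hx
    rw [Polynomial.mem_aroots]
    constructor
    · intro h
      rw [h] at hb
      simp only [Polynomial.map_zero] at hb
      rcases smul_eq_zero.mp hb.symm with h3 | h3
      · exact hb0 h3
      · exact hQne h3
    · have hx0 : aeval (Φ x) (minpoly ℚ x) = 0 := by
        rw [aeval_algHom_apply Φ x (minpoly ℚ x), minpoly.aeval, map_zero]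
      have hQx0 : aeval (Φ x) Q = 0 := by
        rw [hQ, map_prod]
        exact Finset.prod_eq_zero hx hx0
      have : aeval (Φ x) (P.map (algebraMap ℤ ℚ)) = 0 := by
        rw [hb, map_zsmul, hQx0, smul_zero]
      rwa [aeval_map_algebraMap] at this
  -- common denominator
  have hdenom : ∃ d : ℤ, d ≠ 0 ∧ ∀ x ∈ S, IsIntegral ℤ ((d:ℂ) * Φ x) := by
    have hex : ∀ x : E, ∃ d : ℤ, d ≠ 0 ∧ IsIntegral ℤ ((d:ℂ) * Φ x) := by
      intro x
      have halg : IsAlgebraic ℤ (Φ x) := by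
        rw [IsFractionRing.isAlgebraic_iff ℤ ℚ ℂ]
        exact (IsIntegral.of_finite ℚ x).isAlgebraic.algHom Φ
      obtain ⟨dd, hdd0, hdd⟩ := halg.exists_integral_multiple
      refine ⟨dd, hdd0, ?_⟩
      rw [Algebra.smul_def, algebraMap_int_eq, eq_intCast] at hdd
      exact hdd
    choose dd hdd0 hddI using hex
    refine ⟨∏ x ∈ S, dd x, Finset.prod_ne_zero_iff.2 fun x _ => hdd0 x, fun x hx => ?_⟩
    have : ((∏ y ∈ S, dd y : ℤ) : ℂ) * Φ x
        = (((∏ y ∈ S.erase x, dd y : ℤ)) : ℂ) * ((dd x : ℂ) * Φ x) := by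
      rw [← Finset.prod_erase_mul S dd hx]
      push_cast
      ring
    rw [this]
    refine IsIntegral.mul ?_ (hddI x)
    have : (((∏ y ∈ S.erase x, dd y : ℤ)) : ℂ) = algebraMap ℤ ℂ (∏ y ∈ S.erase x, dd y) := by simp
    rw [this]
    exact isIntegral_algebraMap
  obtain ⟨d, hd0, hdint⟩ := hdenom
  -- main analytic input
  obtain ⟨c, hc0, H⟩ := exp_polynomial_approx P hP0
  set D : ℕ := P.natDegree with hD
  set a : ℝ := ∑ x ∈ S, |(C x : ℝ)| with ha
  set c₂ : ℝ := (|d| : ℝ) ^ (D + 1) * c with hc₂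
  set N₀ : ℕ := max (max (P.eval 0).natAbs (C 0).natAbs) d.natAbs with hN₀
  obtain ⟨p, hpN, hprime, hsmall⟩ :=
    exists_prime_mul_pow_div_factorial_lt_one' N₀ a c₂
  have hpP : (P.eval 0).natAbs < p := lt_of_le_of_lt (le_trans (le_max_left _ _) (le_max_left _ _)) hpN
  have hpC : (C 0).natAbs < p := lt_of_le_of_lt (le_trans (le_max_right _ _) (le_max_left _ _)) hpN
  have hpd : d.natAbs < p := lt_of_le_of_lt (le_max_right _ _) hpN
  obtain ⟨n, hn, gp, hgpdeg, hest⟩ := H p hprime hpP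
  set Ep : ℕ := p * (D + 1) with hEp
  -- the Galois-invariant sum
  set Mt : E := ∑ x ∈ S, C x • (aeval x gp) with hMt
  have hMfix : ∀ τ : E ≃ₐ[ℚ] E, τ Mt = Mt := by
    intro τ
    rw [hMt, map_sum]
    have hterm : ∀ x : E, τ (C x • aeval x gp) = C x • aeval (τ x) gp := fun x => by
      rw [map_zsmul]
      congr 1
      exact (aeval_algHom_apply (τ.toAlgHom.toRingHom.toIntAlgHom) x gp).symm
    simp only [hterm]
    refine Finset.sum_equiv τ.toEquiv (fun x => ⟨fun h => hSstable τ x h, fun h => ?_⟩) ?_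
    · have := hSstable τ.symm _ h
      simpa using this
    · intro x hx
      show C x • (aeval (τ x)) gp = C (τ.toEquiv x) • (aeval (τ.toEquiv x)) gp
      have : C (τ.toEquiv x) = C x := hequi τ x
      rw [this]
      rfl
  have hMrat : ∃ q : ℚ, algebraMap ℚ E q = Mt := by
    have : Mt ∈ (⊥ : IntermediateField ℚ E) := by
      rw [← IsGalois.fixedField_fixingSubgroup (⊥ : IntermediateField ℚ E)]
      intro σ
      exact hMfix σ.1
    exact (IntermediateField.mem_bot).mp this
  obtain ⟨q, hq⟩ := hMrat
  set M : ℂ := ∑ x ∈ S, (C x : ℂ) * aeval (Φ x) gp with hM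
  have hΦMt : Φ Mt = M := by
    rw [hMt, map_sum, hM]
    refine Finset.sum_congr rfl fun x hx => ?_
    rw [map_zsmul, zsmul_eq_mul]
    congr 1
    exact (aeval_algHom_apply (Φ.toRingHom.toIntAlgHom) x gp).symm
  have hMq : M = (q : ℂ) := by
    rw [← hΦMt, ← hq]
    rw [show Φ (algebraMap ℚ E q) = algebraMap ℚ ℂ q from Φ.commutes q]
    simp
  -- integrality of d^Ep * M
  have hMint : IsIntegral ℤ ((d:ℂ) ^ Ep * M) := by
    rw [hM, Finset.mul_sum]
    refine IsIntegral.sum _ fun x hx => ?_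
    have : (d:ℂ) ^ Ep * ((C x : ℂ) * aeval (Φ x) gp) = C x • ((d:ℂ) ^ Ep * aeval (Φ x) gp) := by
      rw [zsmul_eq_mul]; ring
    rw [this]
    exact IsIntegral.smul _ (int_aeval_integral (Φ x) d (hdint x hx) gp Ep hgpdeg)
  have hqint : IsIntegral ℤ ((d:ℚ) ^ Ep * q) := by
    have h1 : algebraMap ℚ ℂ ((d:ℚ) ^ Ep * q) = (d:ℂ) ^ Ep * M := by
      rw [hMq]; push_cast; norm_cast
    have := hMint
    rw [← h1] at this
    exact (isIntegral_algebraMap_iff (algebraMap ℚ ℂ).injective).mp this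
  obtain ⟨m, hm⟩ := IsIntegrallyClosed.isIntegral_iff.mp hqint
  -- the integer N
  set N : ℤ := d ^ Ep * (C 0 * n) + p * m with hN
  have hmC : (m : ℂ) = (d:ℂ) ^ Ep * (q:ℂ) := by exact_mod_cast congrArg (fun t : ℚ => (t:ℂ)) hm
  have hNC : (N : ℂ) = (d:ℂ) ^ Ep * ((C 0 : ℂ) * n + p * M) := by
    rw [hN, hMq]
    push_cast [hmC]
    ring
  -- N is not divisible by p, hence nonzero
  have hpZ : Prime (p : ℤ) := Nat.prime_iff_prime_int.mp hprime
  have hNdvd : ¬ (p:ℤ) ∣ N := by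
    intro hdvd
    have h1 : (p:ℤ) ∣ d ^ Ep * (C 0 * n) := by
      have h2 : (p:ℤ) ∣ (p:ℤ) * m := dvd_mul_right _ _
      have := dvd_sub hdvd h2
      rw [hN] at this
      simpa using this
    rcases hpZ.dvd_mul.mp h1 with h3 | h3
    · have h4 : (p:ℤ) ∣ d := hpZ.dvd_of_dvd_pow h3
      have h5 : p ∣ d.natAbs := by simpa using Int.natAbs_dvd_natAbs.mpr h4
      have := Nat.le_of_dvd (Int.natAbs_pos.2 hd0) h5
      omega
    rcases hpZ.dvd_mul.mp h3 with h4 | h4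
    · have h5 : p ∣ (C 0).natAbs := by simpa using Int.natAbs_dvd_natAbs.mpr h4
      have := Nat.le_of_dvd (Int.natAbs_pos.2 h0) h5
      omega
    · exact hn h4
  have hN0 : N ≠ 0 := fun h => hNdvd (h ▸ dvd_zero _)
  have hN1 : (1:ℝ) ≤ |(N:ℝ)| := by
    have h1 : (1:ℤ) ≤ |N| := Int.one_le_abs (by omega)
    calc (1:ℝ) = ((1:ℤ):ℝ) := by norm_num
      _ ≤ ((|N|:ℤ):ℝ) := by exact_mod_cast h1
      _ = |(N:ℝ)| := by push_cast; rfl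
  -- the estimate
  have hkey : (C 0 : ℂ) * n + p * M = -(∑ x ∈ S, (C x : ℂ) * ((n:ℂ) * Complex.exp (Φ x)
      - (p:ℂ) * aeval (Φ x) gp)) := by
    have e1 : ∑ x ∈ S, (C x : ℂ) * ((n:ℂ) * Complex.exp (Φ x) - (p:ℂ) * aeval (Φ x) gp)
        = (n:ℂ) * (∑ x ∈ S, (C x:ℂ) * Complex.exp (Φ x)) - (p:ℂ) * M := by
      rw [hM, Finset.mul_sum, Finset.mul_sum, ← Finset.sum_sub_distrib]
      exact Finset.sum_congr rfl fun x _ => by ring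
    rw [e1]
    linear_combination (n:ℂ) * hsum'
  have hεbound : ‖(C 0 : ℂ) * n + p * M‖ ≤ a * (c ^ p / (p-1)!) := by
    rw [hkey, norm_neg, ha, Finset.sum_mul]
    refine (norm_sum_le _ _).trans (Finset.sum_le_sum fun x hx => ?_)
    rw [norm_mul]
    have h3 : ‖(C x : ℂ)‖ = |(C x : ℝ)| := by
      rw [show ((C x : ℤ) : ℂ) = ((C x : ℝ) : ℂ) by push_cast; rfl, Complex.norm_real,
        Real.norm_eq_abs]
    rw [h3]
    exact mul_le_mul_of_nonneg_left (hest (Φ x) (hroots x hx)) (abs_nonneg _)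
  have habs : ‖(N:ℂ)‖ = |(N:ℝ)| := by
    rw [show ((N:ℤ):ℂ) = ((N:ℝ):ℂ) by push_cast; rfl, Complex.norm_real, Real.norm_eq_abs]
  have habsd : ‖((d:ℤ):ℂ)‖ = |(d:ℝ)| := by
    rw [show ((d:ℤ):ℂ) = ((d:ℝ):ℂ) by push_cast; rfl, Complex.norm_real, Real.norm_eq_abs]
  have hfinal : (1:ℝ) ≤ a * (c₂ ^ p / (p-1)!) := by
    have h2 : ‖(N:ℂ)‖ = |(d:ℝ)| ^ Ep * ‖(C 0 : ℂ) * n + p * M‖ := by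
      rw [hNC, norm_mul, norm_pow, habsd]
    have h4 : (1:ℝ) ≤ |(d:ℝ)| ^ Ep * ‖(C 0 : ℂ) * n + p * M‖ := by
      rw [← h2, habs]; exact hN1
    have h5 : |(d:ℝ)| ^ Ep * ‖(C 0 : ℂ) * n + p * M‖ ≤ |(d:ℝ)| ^ Ep * (a * (c ^ p / (p-1)!)) :=
      mul_le_mul_of_nonneg_left hεbound (by positivity)
    refine (h4.trans h5).trans (le_of_eq ?_)
    rw [hc₂, mul_pow, hEp, pow_mul']
    ring
  rw [mul_div_assoc] at hsmall
  linarith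

theorem sum_exp_ne_zero (ι : Type) (s : Finset ι) (hne : s.Nonempty)
    (aex : ι → ℂ) (hinj : Set.InjOn aex s) (halg : ∀ i ∈ s, IsAlgebraic ℚ (aex i))
    (b : ι → ℤ) (hb : ∀ i ∈ s, b i ≠ 0)
    (h : ∑ i ∈ s, (b i : ℂ) * Complex.exp (aex i) = 0) : False := by
  classical
  set F : ℚ[X] := ∏ i ∈ s, minpoly ℚ (aex i) with hF
  have hFne : F ≠ 0 :=
    Finset.prod_ne_zero_iff.2 fun i hi => minpoly.ne_zero (halg i hi).isIntegral
  set E := F.SplittingField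
  haveI : Normal ℚ E := Polynomial.SplittingField.instNormal F
  haveI : IsGalois ℚ E := ⟨⟩
  set Φ : E →ₐ[ℚ] ℂ := IsAlgClosed.lift with hΦ
  -- lift the exponents to E
  have hlift : ∀ i ∈ s, ∃ y : E, Φ y = aex i := by
    intro i hi
    have hroot : (F.map (algebraMap ℚ ℂ)).IsRoot (aex i) := by
      rw [IsRoot, eval_map, ← aeval_def, hF, map_prod]
      exact Finset.prod_eq_zero hi (minpoly.aeval ℚ (aex i))
    have hmapmap : F.map (algebraMap ℚ ℂ) = (F.map (algebraMap ℚ E)).map Φ.toRingHom := by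
      rw [Polynomial.map_map]
      congr 1
      exact (RingHom.ext fun q => (Φ.commutes q).symm)
    have hsplits : Splits (F.map (algebraMap ℚ E)) :=
      SplittingField.splits F
    have hroots_eq : ((F.map (algebraMap ℚ E)).map Φ.toRingHom).roots
        = (F.map (algebraMap ℚ E)).roots.map Φ := hsplits.roots_map _
    have hmem : aex i ∈ ((F.map (algebraMap ℚ E)).map Φ.toRingHom).roots := by
      rw [← hmapmap, mem_roots]
      · exact hroot
      · rw [hmapmap]
        refine Polynomial.map_ne_zero_iff Φ.toRingHom.injective |>.2 ?_
        exact Polynomial.map_ne_zero_iff (algebraMap ℚ E).injective |>.2 hFne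
    rw [hroots_eq, Multiset.mem_map] at hmem
    obtain ⟨y, _, hy⟩ := hmem
    exact ⟨y, hy⟩
  set yy : ι → E := fun i => if h : ∃ y : E, Φ y = aex i then h.choose else 0 with hyydef
  have hyy : ∀ i ∈ s, Φ (yy i) = aex i := by
    intro i hi
    rw [hyydef]
    simp only []
    rw [dif_pos (hlift i hi)]
    exact (hlift i hi).choose_spec
  have hyinj : Set.InjOn yy s := by
    intro i hi j hj hij
    exact hinj hi hj (by rw [← hyy i hi, ← hyy j hj, hij])
  -- the formal sum
  set r : AddMonoidAlgebra ℤ E := ∑ i ∈ s, AddMonoidAlgebra.single (yy i) (b i) with hr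
  obtain ⟨i₀, hi₀⟩ := hne
  have hr0 : r ≠ 0 := by
    intro hr0
    have : r.coeff (yy i₀) = b i₀ := by
      rw [hr, AddMonoidAlgebra.coeff_sum]
      simp only [AddMonoidAlgebra.coeff_single]
      rw [Finset.sum_apply']
      rw [Finset.sum_eq_single_of_mem i₀ hi₀]
      · rw [Finsupp.single_apply, if_pos rfl]
      · intro j hj hji
        rw [Finsupp.single_apply, if_neg (fun hc => hji (hyinj hj hi₀ hc))]
    rw [hr0] at this
    exact hb i₀ hi₀ (by simpa using this.symm)
  -- the evaluation ring hom
  set g : Multiplicative E →* ℂ :=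
    { toFun := fun x => Complex.exp (Φ x.toAdd)
      map_one' := by
        show Complex.exp (Φ (0:E)) = 1
        rw [map_zero, Complex.exp_zero]
      map_mul' := fun x y => by
        show Complex.exp (Φ (x.toAdd + y.toAdd)) = _
        rw [map_add, Complex.exp_add] } with hg
  set ev : AddMonoidAlgebra ℤ E →+* ℂ :=
    AddMonoidAlgebra.liftNCRingHom (Int.castRingHom ℂ) g (fun _ _ => Commute.all _ _) with hev
  have hev_single : ∀ (x : E) (m : ℤ), ev (AddMonoidAlgebra.single x m) = (m:ℂ) * Complex.exp (Φ x) :=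
    fun x m => AddMonoidAlgebra.liftNC_single _ _ x m
  have hev_eq : ∀ f : AddMonoidAlgebra ℤ E,
      ev f = f.coeff.sum fun x m => (m : ℂ) * Complex.exp (Φ x) := by
    intro f
    conv_lhs => rw [← f.sum_coeff_single]
    rw [map_finsuppSum]
    exact Finsupp.sum_congr fun x _ => hev_single x (f.coeff x)
  have hevr : ev r = 0 := by
    rw [hr, map_sum, ← h]
    exact Finset.sum_congr rfl fun i hi => by rw [hev_single, hyy i hi]
  -- domain congruence machinery
  set dom : (E ≃+ E) → (AddMonoidAlgebra ℤ E ≃ₐ[ℤ] AddMonoidAlgebra ℤ E) :=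
    fun e => AddMonoidAlgebra.domCongr ℤ ℤ e with hdom
  have hcomp : ∀ (e₁ e₂ : E ≃+ E) (f : AddMonoidAlgebra ℤ E),
      dom e₁ (dom e₂ f) = dom (e₂.trans e₁) f := by
    intro e₁ e₂ f
    induction f using AddMonoidAlgebra.induction_linear with
    | zero => simp
    | add f1 f2 hf1 hf2 => rw [map_add, map_add, map_add, hf1, hf2]
    | single a m =>
      show dom e₁ (dom e₂ (AddMonoidAlgebra.single a m)) = dom (e₂.trans e₁)
        (AddMonoidAlgebra.single a m)
      rw [hdom]
      simp only [AddMonoidAlgebra.domCongr_single]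
      rfl
  -- the symmetrized product
  set Ψ : AddMonoidAlgebra ℤ E := ∏ σ : E ≃ₐ[ℚ] E, dom σ.toAddEquiv r with hΨ
  have hΨ0 : Ψ ≠ 0 := by
    rw [hΨ]
    refine Finset.prod_ne_zero_iff.2 fun σ _ => fun hc => hr0 ?_
    have := congrArg (dom σ.toAddEquiv).symm hc
    rwa [AlgEquiv.symm_apply_apply, map_zero] at this
  have hΨev : ev Ψ = 0 := by
    rw [hΨ, map_prod]
    refine Finset.prod_eq_zero (Finset.mem_univ (1 : E ≃ₐ[ℚ] E)) ?_
    have h1 : (1 : E ≃ₐ[ℚ] E).toAddEquiv = AddEquiv.refl E := rfl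
    rw [h1, hdom]
    simp only [AddMonoidAlgebra.domCongr_refl]
    simpa using hevr
  have hΨequi : ∀ τ : E ≃ₐ[ℚ] E, dom τ.toAddEquiv Ψ = Ψ := by
    intro τ
    rw [hΨ, map_prod]
    have h1 : ∀ σ : E ≃ₐ[ℚ] E, dom τ.toAddEquiv (dom σ.toAddEquiv r)
        = dom (τ * σ : E ≃ₐ[ℚ] E).toAddEquiv r := by
      intro σ
      rw [hcomp]
      rfl
    simp only [h1]
    exact Fintype.prod_bijective (fun σ => τ * σ) (Group.mulLeft_bijective τ)
      (fun σ => dom (τ * σ).toAddEquiv r) (fun σ => dom σ.toAddEquiv r) (fun σ => rfl)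
  -- the reversal
  set negE : E ≃+ E := AddEquiv.neg E with hnegE
  set ρ : AddMonoidAlgebra ℤ E := Ψ * dom negE Ψ with hρ
  have hρev : ev ρ = 0 := by rw [hρ, map_mul, hΨev, zero_mul]
  have hρequi : ∀ τ : E ≃ₐ[ℚ] E, dom τ.toAddEquiv ρ = ρ := by
    intro τ
    rw [hρ, map_mul, hΨequi]
    congr 1
    rw [hcomp]
    have : negE.trans τ.toAddEquiv = τ.toAddEquiv.trans negE := by
      ext x
      show τ (-x) = -(τ x)
      rw [map_neg]
    rw [this, ← hcomp, hΨequi]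
  have hρcoe : ∀ (τ : E ≃ₐ[ℚ] E) (x : E), ρ.coeff (τ x) = ρ.coeff x := by
    intro τ x
    conv_lhs => rw [← hρequi τ]
    rw [hdom, AddMonoidAlgebra.coeff_domCongr]
    congr 1
    exact AddEquiv.symm_apply_apply τ.toAddEquiv x
  -- the coefficient at 0
  have hρ0 : ρ.coeff 0 = ∑ x ∈ Ψ.coeff.support, Ψ.coeff x * Ψ.coeff x := by
    rw [hρ, AddMonoidAlgebra.coeff_mul]
    rw [Finsupp.sum]
    refine Finset.sum_congr rfl fun x hx => ?_
    rw [Finsupp.sum]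
    rw [Finset.sum_eq_single_of_mem (-x) ?_ ?_]
    · rw [if_pos (add_neg_cancel x)]
      congr 1
      rw [hdom, AddMonoidAlgebra.coeff_domCongr]
      congr 1
      simp [hnegE]
      show -(-x) = x
      exact (neg_neg x : _)
    · rw [Finsupp.mem_support_iff]
      have : (dom negE Ψ).coeff (-x) = Ψ.coeff x := by
        rw [hdom, AddMonoidAlgebra.coeff_domCongr]
        congr 1
        simp [hnegE]
        exact neg_neg x
      rw [this]
      exact Finsupp.mem_support_iff.1 hx
    · intro y hy hyx
      rw [if_neg]
      intro hc
      exact hyx ((neg_eq_of_add_eq_zero_right hc).symm)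
  have hρ0pos : 0 < ρ.coeff 0 := by
    rw [hρ0]
    refine Finset.sum_pos (fun x hx => mul_self_pos.2 (Finsupp.mem_support_iff.1 hx)) ?_
    exact Finsupp.support_nonempty_iff.2 (AddMonoidAlgebra.coeff_eq_zero.not.2 hΨ0)
  have hρsum : (ρ.coeff.sum fun x m => (m : ℂ) * Complex.exp (Φ x)) = 0 := by
    rw [← hev_eq]; exact hρev
  exact core_lemma E Φ ρ.coeff (ne_of_gt hρ0pos) hρcoe hρsum

theorem rat_version (ι : Type) (s : Finset ι) (aex : ι → ℂ) (hinj : Set.InjOn aex s)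
    (halg : ∀ i ∈ s, IsAlgebraic ℚ (aex i)) (c : ι → ℚ)
    (h : ∑ i ∈ s, (c i : ℂ) * Complex.exp (aex i) = 0) : ∀ i ∈ s, c i = 0 := by
  classical
  by_contra hcon
  push_neg at hcon
  obtain ⟨i₀, hi₀, hc₀⟩ := hcon
  set t := s.filter (fun i => c i ≠ 0) with ht
  have htsub : t ⊆ s := Finset.filter_subset _ _
  have htne : t.Nonempty := ⟨i₀, Finset.mem_filter.2 ⟨hi₀, hc₀⟩⟩
  have htmem : ∀ i ∈ t, c i ≠ 0 := fun i hi => (Finset.mem_filter.1 hi).2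
  set N : ℤ := ∏ i ∈ t, ((c i).den : ℤ) with hN
  have hNpos : 0 < N := Finset.prod_pos fun i _ => by exact_mod_cast (c i).pos
  set b : ι → ℤ := fun i => (c i).num * (N / ((c i).den : ℤ)) with hb
  have hden_dvd : ∀ i ∈ t, ((c i).den : ℤ) ∣ N := fun i hi => Finset.dvd_prod_of_mem _ hi
  have hbne : ∀ i ∈ t, b i ≠ 0 := by
    intro i hi
    refine mul_ne_zero (Rat.num_ne_zero.2 (htmem i hi)) fun h0 => ?_
    have h1 : N = N / ((c i).den : ℤ) * ((c i).den : ℤ) := (Int.ediv_mul_cancel (hden_dvd i hi)).symm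
    rw [h0, zero_mul] at h1
    omega
  have hcast : ∀ i ∈ t, ((b i : ℤ) : ℚ) = c i * (N : ℚ) := by
    intro i hi
    obtain ⟨k, hk⟩ := hden_dvd i hi
    have hden0 : ((c i).den : ℤ) ≠ 0 := by exact_mod_cast (c i).den_nz
    rw [hb]
    simp only []
    rw [hk, Int.mul_ediv_cancel_left _ hden0]
    push_cast
    rw [show ((c i).num : ℚ) = c i * ((c i).den : ℚ) from (Rat.mul_den_eq_num (c i)).symm]
    ring
  have hsum0 : ∑ i ∈ t, ((b i : ℤ) : ℂ) * Complex.exp (aex i) = 0 := by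
    have h1 : ∀ i ∈ t, ((b i : ℤ) : ℂ) * Complex.exp (aex i)
        = (N : ℂ) * ((c i : ℂ) * Complex.exp (aex i)) := by
      intro i hi
      have h2 : ((b i : ℤ) : ℂ) = ((c i : ℂ) * (N : ℂ)) := by
        have := hcast i hi
        have h3 := congrArg (fun q : ℚ => (q : ℂ)) this
        push_cast at h3 ⊢
        rw [h3]
      rw [h2]; ring
    rw [Finset.sum_congr rfl h1, ← Finset.mul_sum]
    have h4 : ∑ i ∈ t, (c i : ℂ) * Complex.exp (aex i)
        = ∑ i ∈ s, (c i : ℂ) * Complex.exp (aex i) := by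
      rw [ht]
      refine Finset.sum_filter_of_ne fun i _ hne0 => ?_
      intro hc
      exact hne0 (by rw [hc]; simp)
    rw [h4, h, mul_zero]
  exact sum_exp_ne_zero ι t htne aex (hinj.mono (by exact_mod_cast htsub))
    (fun i hi => halg i (htsub hi)) b hbne hsum0

/-- Lindemann–Weierstrass theorem. -/
theorem lindemann_weierstrass (n : ℕ) (α : Fin n → ℂ)
    (halg : ∀ i, IsAlgebraic ℚ (α i)) (hli : LinearIndependent ℚ α) :
    AlgebraicIndependent ℚ (fun i => Complex.exp (α i)) := by
  classical
  rw [algebraicIndependent_iff]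
  intro P hP
  set w : (Fin n →₀ ℕ) → ℂ := fun d => ∑ i, (d i : ℂ) * α i with hw
  have hwinj : Function.Injective w := by
    intro d e hde
    have hg : ∀ i, ((d i : ℚ) - (e i : ℚ)) = 0 := by
      refine Fintype.linearIndependent_iff.mp hli (fun i => (d i : ℚ) - (e i : ℚ)) ?_
      have : ∑ i, (((d i : ℚ) - (e i : ℚ)) : ℚ) • α i
          = (∑ i, (d i : ℂ) * α i) - (∑ i, (e i : ℂ) * α i) := by
        rw [← Finset.sum_sub_distrib]
        refine Finset.sum_congr rfl fun i _ => ?_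
        rw [Rat.smul_def]
        push_cast
        ring
      rw [this]
      show w d - w e = 0
      rw [hde, sub_self]
    ext i
    have := hg i
    have h2 : (d i : ℚ) = (e i : ℚ) := by linarith
    exact_mod_cast h2
  have hwalg : ∀ d, IsAlgebraic ℚ (w d) := by
    intro d
    rw [hw]
    refine (IsIntegral.sum _ fun i _ => IsIntegral.mul ?_ (halg i).isIntegral).isAlgebraic
    have : ((d i : ℕ) : ℂ) = algebraMap ℚ ℂ ((d i : ℕ) : ℚ) := by push_cast; simp
    rw [this]
    exact isIntegral_algebraMap
  have hsum : ∑ d ∈ P.support, ((MvPolynomial.coeff d P : ℚ) : ℂ) * Complex.exp (w d) = 0 := by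
    rw [← hP, MvPolynomial.aeval_def, MvPolynomial.eval₂_eq]
    refine Finset.sum_congr rfl fun d _ => ?_
    congr 1
    have h1 : ∀ i ∈ d.support, Complex.exp (α i) ^ d i = Complex.exp ((d i : ℂ) * α i) := by
      intro i _
      rw [← Complex.exp_nat_mul]
    rw [Finset.prod_congr rfl h1, ← Complex.exp_sum]
    congr 1
    rw [hw]
    refine (Finset.sum_subset (Finset.subset_univ d.support) fun i _ hi => ?_).symm
    rw [Finsupp.notMem_support_iff.1 hi]
    simp
  have hzero := rat_version _ P.support w hwinj.injOn (fun d _ => hwalg d)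
    (fun d => MvPolynomial.coeff d P) hsum
  ext d
  by_cases hd : d ∈ P.support
  · simpa using hzero d hd
  · simpa using MvPolynomial.notMem_support_iff.1 hd
end

section
/- Assume Schanuel's conjecture: for every n ≥ 1 and all complex numbers z₁, …, zₙ linearly independent over ℚ, among the 2n numbers z₁, …, zₙ, e^{z₁}, …, e^{zₙ} at least n are algebraically independent over ℚ (i.e. some n-element subfamily is algebraically independent over ℚ). Then for every complex number α algebraic over ℚ, the number e^{e^{α}} is transcendental over ℚ. -/
/-- From Schanuel (n = 1): `e^β` is transcendental for algebraic nonzero `β`. -/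
lemma exp_transcendental_of_schanuel_aux
    (schanuel : ∀ n : ℕ, 1 ≤ n → ∀ z : Fin n → ℂ, LinearIndependent ℚ z →
      ∃ s : Finset (Fin n ⊕ Fin n), s.card = n ∧
        AlgebraicIndependent ℚ (fun i : s => Sum.elim z (fun j => Complex.exp (z j)) i))
    (β : ℂ) (hβ0 : β ≠ 0) (hβ : IsAlgebraic ℚ β) :
    Transcendental ℚ (Complex.exp β) := by
  have hli : LinearIndependent ℚ ![β] := by
    apply linearIndependent_unique_iff.mpr
    simpa using hβ0
  obtain ⟨s, hcard, hind⟩ := schanuel 1 le_rfl ![β] hli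
  intro htr
  obtain ⟨i, hi⟩ := Finset.card_pos.mp (by rw [hcard]; exact one_pos)
  have htrans := hind.transcendental ⟨i, hi⟩
  rcases i with j | j
  · have hj : j = 0 := Subsingleton.elim _ _
    subst hj
    exact htrans (by simpa using hβ)
  · have hj : j = 0 := Subsingleton.elim _ _
    subst hj
    exact htrans (by simpa using htr)

/-- Assuming Schanuel's conjecture, `e^{e^α}` is transcendental for every algebraic `α`. -/
theorem exp_exp_transcendental_of_schanuel
    (schanuel : ∀ n : ℕ, 1 ≤ n → ∀ z : Fin n → ℂ, LinearIndependent ℚ z →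
      ∃ s : Finset (Fin n ⊕ Fin n), s.card = n ∧
        AlgebraicIndependent ℚ (fun i : s => Sum.elim z (fun j => Complex.exp (z j)) i))
    (α : ℂ) (hα : IsAlgebraic ℚ α) :
    Transcendental ℚ (Complex.exp (Complex.exp α)) := by
  by_cases hα0 : α = 0
  · subst hα0
    rw [Complex.exp_zero]
    exact exp_transcendental_of_schanuel_aux schanuel 1 one_ne_zero (isAlgebraic_one)
  · have hexp : Transcendental ℚ (Complex.exp α) :=
      exp_transcendental_of_schanuel_aux schanuel α hα0 hα
    -- z = ![α, exp α] is linearly independent over ℚ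
    have hli : LinearIndependent ℚ ![α, Complex.exp α] := by
      rw [LinearIndependent.pair_iff]
      intro q r h
      by_cases hr : r = 0
      · subst hr
        simp only [zero_smul, add_zero, smul_eq_zero] at h
        rcases h with hq | h
        · exact ⟨by exact_mod_cast hq, rfl⟩
        · exact absurd h hα0
      · exfalso
        apply hexp
        have : Complex.exp α = ((-q / r : ℚ) : ℂ) * α := by
          have hr' : (r : ℂ) ≠ 0 := by exact_mod_cast hr
          push_cast
          field_simp
          rw [Rat.smul_def, Rat.smul_def] at h
          linear_combination h
        rw [this]
        exact ((isIntegral_algebraMap (x := (-q / r : ℚ))).mul hα.isIntegral).isAlgebraic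
    obtain ⟨s, hcard, hind⟩ := schanuel 2 one_le_two ![α, Complex.exp α] hli
    intro htr
    -- every element of s has transcendental value, so s ⊆ {inl 1, inr 0}
    have hval : ∀ i ∈ s, i = Sum.inl 1 ∨ i = Sum.inr 0 := by
      intro i hi
      have htrans := hind.transcendental ⟨i, hi⟩
      rcases i with j | j
      · fin_cases j
        · exact absurd (by simpa using hα) htrans
        · exact Or.inl rfl
      · fin_cases j
        · exact Or.inr rfl
        · exact absurd (by simpa using htr) htrans
    -- but the values at inl 1 and inr 0 agree, contradicting injectivity
    have hinj := hind.injective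
    have h1 : Sum.inl 1 ∈ s ∧ Sum.inr 0 ∈ s := by
      have h2 : 2 ≤ s.card := le_of_eq hcard.symm
      by_contra hcon
      push_neg at hcon
      have hsub : s ⊆ {Sum.inl 1, Sum.inr 0} := by
        intro i hi
        rcases hval i hi with h | h <;> simp [h]
      rcases Classical.em (Sum.inl 1 ∈ s) with hmem | hmem
      · have := hcon hmem
        have : s ⊆ {Sum.inl 1} := by
          intro i hi
          rcases hval i hi with h | h
          · simp [h]
          · exact absurd (h ▸ hi) this
        have := Finset.card_le_card this
        simp at this; omega
      · have : s ⊆ {Sum.inr 0} := by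
          intro i hi
          rcases hval i hi with h | h
          · exact absurd (h ▸ hi) hmem
          · simp [h]
        have := Finset.card_le_card this
        simp at this; omega
    have := hinj (a₁ := ⟨Sum.inl 1, h1.1⟩) (a₂ := ⟨Sum.inr 0, h1.2⟩) (by simp)
    simp at this
end

section
/- A complex number ξ is algebraic over ℚ if and only if ω(ξ) = 0. -/
/-- `Ω_n(ξ, H)`: the infimum (in fact minimum) of `|P(ξ)|` over nonzero integer
polynomials `P` of degree at most `n`, height at most `H`, with `P(ξ) ≠ 0`. -/
noncomputable def mahlerOmegaCap (ξ : ℂ) (n H : ℕ) : ℝ :=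
  sInf {x : ℝ | ∃ P : Polynomial ℤ, P ≠ 0 ∧ P.natDegree ≤ n ∧
    (∀ k, |P.coeff k| ≤ (H : ℤ)) ∧ Polynomial.aeval ξ P ≠ 0 ∧
    x = ‖Polynomial.aeval ξ P‖}

/-- `ω_n(ξ, H) = - log Ω_n(ξ, H) / (n log H)`, so that `Ω_n(ξ,H) = H ^ (-n ω_n(ξ,H))`. -/
noncomputable def mahlerOmegaNH (ξ : ℂ) (n H : ℕ) : ℝ :=
  - Real.log (mahlerOmegaCap ξ n H) / (n * Real.log H)

/-- `ω_n(ξ) = limsup_{H → ∞} ω_n(ξ, H)`, as an extended real number. -/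
noncomputable def mahlerOmegaN (ξ : ℂ) (n : ℕ) : EReal :=
  Filter.limsup (fun H : ℕ => (mahlerOmegaNH ξ n H : EReal)) Filter.atTop

/-- `ω(ξ) = limsup_{n → ∞} ω_n(ξ)`, as an extended real number. -/
noncomputable def mahlerOmega (ξ : ℂ) : EReal :=
  Filter.limsup (fun n : ℕ => mahlerOmegaN ξ n) Filter.atTop

/-- `ν(ξ)`: the least positive integer `n` with `ω_n(ξ) = ∞`, or `∞` if there is none. -/
noncomputable def mahlerNu (ξ : ℂ) : ℕ∞ :=
  sInf {N : ℕ∞ | ∃ m : ℕ, N = m ∧ 0 < m ∧ mahlerOmegaN ξ m = ⊤}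

/-- The Mahler class of a complex number: `0` for `A`-numbers (`ω(ξ) = 0`), `1` for
`S`-numbers (`0 < ω(ξ) < ∞`), `2` for `U`-numbers (`ω(ξ) = ∞`, `ν(ξ) < ∞`), and
`3` for `T`-numbers (`ω(ξ) = ∞`, `ν(ξ) = ∞`). -/
noncomputable def mahlerClass (ξ : ℂ) : ℕ :=
  if mahlerOmega ξ = 0 then 0
  else if mahlerOmega ξ < ⊤ then 1
  else if mahlerNu ξ < ⊤ then 2
  else 3


open Polynomial Filter

/-- compatibility: the complex absolute value as an `AbsoluteValue`. -/
noncomputable def Complex.abs : AbsoluteValue ℂ ℝ := NormedField.toAbsoluteValue ℂ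

lemma Complex.abs_intCast (n : ℤ) : Complex.abs (n : ℂ) = |(n : ℝ)| :=
  Complex.norm_intCast n

namespace MahlerAux

/-- The defining set of `mahlerOmegaCap`. -/
def capSet (ξ : ℂ) (n H : ℕ) : Set ℝ :=
  {x : ℝ | ∃ P : Polynomial ℤ, P ≠ 0 ∧ P.natDegree ≤ n ∧
    (∀ k, |P.coeff k| ≤ (H : ℤ)) ∧ Polynomial.aeval ξ P ≠ 0 ∧
    x = Complex.abs (Polynomial.aeval ξ P)}

lemma one_mem_capSet (ξ : ℂ) (n : ℕ) {H : ℕ} (hH : 1 ≤ H) : (1 : ℝ) ∈ capSet ξ n H := by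
  refine ⟨1, one_ne_zero, by simp, ?_, by simp, by simp⟩
  intro k
  rw [Polynomial.coeff_one]
  split_ifs
  · simpa using by exact_mod_cast hH
  · simp

lemma bddBelow_capSet (ξ : ℂ) (n H : ℕ) : BddBelow (capSet ξ n H) := by
  refine ⟨0, fun x hx => ?_⟩
  obtain ⟨P, -, -, -, -, rfl⟩ := hx
  exact AbsoluteValue.nonneg _ _

lemma capSet_pos (ξ : ℂ) (n H : ℕ) {x : ℝ} (hx : x ∈ capSet ξ n H) : 0 < x := by
  obtain ⟨P, -, -, -, hP, rfl⟩ := hx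
  exact AbsoluteValue.pos _ hP

lemma finite_capSet (ξ : ℂ) (n H : ℕ) : (capSet ξ n H).Finite := by
  have hT2 : {P : Polynomial ℤ | P.natDegree ≤ n ∧ ∀ k, |P.coeff k| ≤ (H : ℤ)}.Finite := by
    apply Set.Finite.of_finite_image (f := fun (P : Polynomial ℤ) (k : Fin (n+1)) => P.coeff k)
    · apply Set.Finite.subset (Set.Finite.pi (fun _ : Fin (n+1) => Set.finite_Icc (-(H:ℤ)) H))
      rintro f ⟨P, hP, rfl⟩
      intro k _
      exact Set.mem_Icc.mpr (abs_le.mp (hP.2 k))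
    · rintro P ⟨hPd, -⟩ Q ⟨hQd, -⟩ h
      ext m
      rcases lt_or_ge m (n+1) with hm | hm
      · exact congrFun h ⟨m, hm⟩
      · rw [Polynomial.coeff_eq_zero_of_natDegree_lt (lt_of_le_of_lt hPd (by omega)),
          Polynomial.coeff_eq_zero_of_natDegree_lt (lt_of_le_of_lt hQd (by omega))]
  apply Set.Finite.subset (Set.Finite.image (fun P => Complex.abs (Polynomial.aeval ξ P)) hT2)
  rintro x ⟨P, hP0, hPd, hPh, hPv, rfl⟩
  exact ⟨P, ⟨hPd, hPh⟩, rfl⟩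

end MahlerAux
namespace MahlerAux

lemma cap_eq (ξ : ℂ) (n H : ℕ) : mahlerOmegaCap ξ n H = sInf (capSet ξ n H) := rfl

lemma cap_nonneg (ξ : ℂ) (n H : ℕ) : 0 ≤ mahlerOmegaCap ξ n H :=
  Real.sInf_nonneg fun _ hx => (capSet_pos ξ n H hx).le

lemma cap_le_one (ξ : ℂ) (n : ℕ) {H : ℕ} (hH : 1 ≤ H) : mahlerOmegaCap ξ n H ≤ 1 :=
  csInf_le (bddBelow_capSet ξ n H) (one_mem_capSet ξ n hH)

lemma cap_pos (ξ : ℂ) (n : ℕ) {H : ℕ} (hH : 1 ≤ H) : 0 < mahlerOmegaCap ξ n H :=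
  capSet_pos ξ n H <| (Set.Nonempty.csInf_mem ⟨1, one_mem_capSet ξ n hH⟩ (finite_capSet ξ n H))

lemma omegaNH_nonneg (ξ : ℂ) (n : ℕ) {H : ℕ} (hH : 1 ≤ H) : 0 ≤ mahlerOmegaNH ξ n H := by
  unfold mahlerOmegaNH
  apply div_nonneg
  · rw [neg_nonneg]
    exact Real.log_nonpos (cap_nonneg ξ n H) (cap_le_one ξ n hH)
  · have : (0:ℝ) ≤ Real.log H := Real.log_nonneg (by exact_mod_cast hH)
    positivity

/-- basic height bound `|P(z)| ≤ (n+1) * H * max(1,|z|)^n` -/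
lemma abs_aeval_le (z : ℂ) {n H : ℕ} {P : Polynomial ℤ} (hPd : P.natDegree ≤ n)
    (hPh : ∀ k, |P.coeff k| ≤ (H : ℤ)) :
    Complex.abs (Polynomial.aeval z P) ≤ (n+1) * H * max 1 (Complex.abs z) ^ n := by
  rw [Polynomial.aeval_eq_sum_range' (lt_of_le_of_lt hPd (Nat.lt_succ_self n)) z]
  refine le_trans (AbsoluteValue.sum_le _ _ _) ?_
  have hM1 : (1:ℝ) ≤ max 1 (Complex.abs z) := le_max_left _ _
  have h1 : ∀ i ∈ Finset.range (n+1),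
      Complex.abs ((P.coeff i) • z ^ i) ≤ H * max 1 (Complex.abs z) ^ n := by
    intro i hi
    rw [zsmul_eq_mul, map_mul, map_pow]
    have h2 : Complex.abs ((P.coeff i : ℂ)) ≤ (H : ℝ) := by
      rw [Complex.abs_intCast]
      exact_mod_cast hPh i
    have h3 : Complex.abs z ^ i ≤ max 1 (Complex.abs z) ^ n :=
      le_trans (pow_le_pow_left₀ (AbsoluteValue.nonneg _ _) (le_max_right _ _) i)
        (pow_le_pow_right₀ hM1 (Nat.lt_succ_iff.mp (Finset.mem_range.mp hi)))
    exact mul_le_mul h2 h3 (by positivity) (by positivity)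
  refine le_trans (Finset.sum_le_sum h1) ?_
  rw [Finset.sum_const, Finset.card_range, nsmul_eq_mul]
  push_cast
  rw [mul_assoc]

end MahlerAux
namespace MahlerAux

open IntermediateField in
lemma liouville {ξ : ℂ} (hξ : IsAlgebraic ℚ ξ) :
    ∃ d : ℕ, ∀ n : ℕ, ∃ c : ℝ, 0 < c ∧ ∀ H : ℕ, 1 ≤ H →
      ∀ P : Polynomial ℤ, P.natDegree ≤ n → (∀ k, |P.coeff k| ≤ (H : ℤ)) →
      Polynomial.aeval ξ P ≠ 0 →
      c / (H:ℝ)^d ≤ Complex.abs (Polynomial.aeval ξ P) := by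
  classical
  have hint : IsAlgebraic ℤ ξ := (IsFractionRing.isAlgebraic_iff ℤ ℚ ℂ).mpr hξ
  obtain ⟨a, ha0, haint⟩ := hint.exists_integral_multiple
  have haℂ : IsIntegral ℤ ((a : ℂ) * ξ) := by
    rw [← zsmul_eq_mul]; exact haint
  have hInt : IsIntegral ℚ ξ := hξ.isIntegral
  let K := IntermediateField.adjoin ℚ ({ξ} : Set ℂ)
  haveI : FiniteDimensional ℚ K := IntermediateField.adjoin.finiteDimensional hInt
  let ξK : K := ⟨ξ, IntermediateField.mem_adjoin_simple_self ℚ ξ⟩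
  let σ₀ : K →ₐ[ℚ] ℂ := K.val
  have hσ₀ξ : σ₀ ξK = ξ := rfl
  set aK : K := algebraMap ℤ K a with haK
  -- integrality of aK * ξK
  have haξK : IsIntegral ℤ (aK * ξK) := by
    rw [← isIntegral_algHom_iff (K.val.restrictScalars ℤ) Subtype.coe_injective]
    have : (K.val.restrictScalars ℤ) (aK * ξK) = (a:ℂ) * ξ := by
      simp [haK, algebraMap_int_eq]
      exact Or.inl rfl
    rw [this]; exact haℂ
  set E := (Finset.univ : Finset (K →ₐ[ℚ] ℂ)).erase σ₀ with hE
  refine ⟨E.card, fun n => ?_⟩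
  have haR : ((a:ℝ)) ≠ 0 := Int.cast_ne_zero.mpr ha0
  set A : ℝ := |(a:ℝ)|^n with hA
  have hApos : 0 < A := by positivity
  set B : ℝ := ∏ σ ∈ E, (A * (n+1) * (max 1 (Complex.abs (σ ξK)))^n) with hB
  have hBpos : 0 < B := Finset.prod_pos (fun σ _ => by positivity)
  refine ⟨(A * B)⁻¹, by positivity, fun H hH P hPd hPh hPv => ?_⟩
  have hHpos : (0:ℝ) < (H:ℝ) := by exact_mod_cast hH
  set y : K := aK ^ n * Polynomial.aeval ξK P with hy
  -- image of y under any embedding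
  have hσy : ∀ σ : K →ₐ[ℚ] ℂ, σ y = (a:ℂ)^n * Polynomial.aeval (σ ξK) P := by
    intro σ
    rw [hy, map_mul, map_pow]
    congr 1
    · congr 1
      simp [haK, algebraMap_int_eq]
    · exact (Polynomial.aeval_algHom_apply (σ.restrictScalars ℤ) ξK P).symm
  have hyv : σ₀ y = (a:ℂ)^n * Polynomial.aeval ξ P := by rw [hσy σ₀, hσ₀ξ]
  have hy0 : y ≠ 0 := by
    intro h
    apply hPv
    have h2 := hyv
    rw [h, map_zero] at h2
    have han : ((a:ℂ))^n ≠ 0 := pow_ne_zero _ (Int.cast_ne_zero.mpr ha0)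
    exact (mul_eq_zero.mp h2.symm).resolve_left han
  -- integrality of y
  have hyInt : IsIntegral ℤ y := by
    have hsum : y = ∑ k ∈ Finset.range (n+1),
        algebraMap ℤ K (P.coeff k * a^(n-k)) * (aK * ξK)^k := by
      rw [hy, Polynomial.aeval_eq_sum_range' (lt_of_le_of_lt hPd (Nat.lt_succ_self n)) ξK,
        Finset.mul_sum]
      refine Finset.sum_congr rfl (fun k hk => ?_)
      have hk' : k ≤ n := Nat.lt_succ_iff.mp (Finset.mem_range.mp hk)
      have hpow : aK ^ n = aK^(n-k) * aK^k := by rw [← pow_add, Nat.sub_add_cancel hk']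
      rw [zsmul_eq_mul, map_mul, map_pow, mul_pow, hpow]
      rw [show algebraMap ℤ K (P.coeff k) = ((P.coeff k : ℤ) : K) from eq_intCast _ _]
      push_cast
      ring
    rw [hsum]
    exact IsIntegral.sum _ (fun k _ =>
      (isIntegral_algebraMap).mul (haξK.pow k))
  -- norm is a nonzero integer
  have hNint : IsIntegral ℤ (Algebra.norm ℚ y) := Algebra.isIntegral_norm ℚ hyInt
  obtain ⟨z, hz⟩ := IsIntegrallyClosed.isIntegral_iff.mp hNint
  have hN0 : Algebra.norm ℚ y ≠ 0 := Algebra.norm_ne_zero_iff.mpr hy0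
  have hz0 : z ≠ 0 := by rintro rfl; rw [map_zero] at hz; exact hN0 hz.symm
  have hge1 : (1:ℝ) ≤ ∏ σ : K →ₐ[ℚ] ℂ, Complex.abs (σ y) := by
    rw [← map_prod Complex.abs (fun σ : K →ₐ[ℚ] ℂ => σ y) Finset.univ,
      ← Algebra.norm_eq_prod_embeddings ℚ ℂ y, ← hz]
    have : (algebraMap ℚ ℂ) ((algebraMap ℤ ℚ) z) = (z : ℂ) := by push_cast; simp
    rw [this, Complex.abs_intCast]
    exact_mod_cast Int.one_le_abs hz0
  -- split off σ₀ and bound the rest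
  have hsplit : (∏ σ : K →ₐ[ℚ] ℂ, Complex.abs (σ y))
      = Complex.abs (σ₀ y) * ∏ σ ∈ E, Complex.abs (σ y) :=
    (Finset.mul_prod_erase Finset.univ _ (Finset.mem_univ σ₀)).symm
  have habs0 : Complex.abs (σ₀ y) = A * Complex.abs (Polynomial.aeval ξ P) := by
    rw [hyv, map_mul, map_pow, Complex.abs_intCast, hA]
  have hbound : ∀ σ ∈ E, Complex.abs (σ y)
      ≤ (H:ℝ) * (A * (n+1) * (max 1 (Complex.abs (σ ξK)))^n) := by
    intro σ _
    rw [hσy σ, map_mul, map_pow, Complex.abs_intCast]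
    have h1 := abs_aeval_le (σ ξK) hPd hPh
    calc |(a:ℝ)|^n * Complex.abs (Polynomial.aeval (σ ξK) P)
        ≤ |(a:ℝ)|^n * ((n+1) * H * (max 1 (Complex.abs (σ ξK)))^n) := by
          exact mul_le_mul_of_nonneg_left h1 (by positivity)
      _ = (H:ℝ) * (A * (n+1) * (max 1 (Complex.abs (σ ξK)))^n) := by rw [hA]; ring
  have hprodle : (∏ σ ∈ E, Complex.abs (σ y)) ≤ (H:ℝ)^E.card * B := by
    calc (∏ σ ∈ E, Complex.abs (σ y))
        ≤ ∏ σ ∈ E, ((H:ℝ) * (A * (n+1) * (max 1 (Complex.abs (σ ξK)))^n)) :=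
          Finset.prod_le_prod (fun σ _ => AbsoluteValue.nonneg _ _) hbound
      _ = (H:ℝ)^E.card * B := by rw [Finset.prod_mul_distrib, Finset.prod_const, hB]
  have hkey : (1:ℝ) ≤ (A * Complex.abs (Polynomial.aeval ξ P)) * ((H:ℝ)^E.card * B) := by
    refine le_trans hge1 ?_
    rw [hsplit, habs0]
    exact mul_le_mul_of_nonneg_left hprodle (by positivity)
  -- conclude
  rw [div_le_iff₀ (by positivity)]
  rw [inv_le_iff_one_le_mul₀ (by positivity)]
  calc (1:ℝ) ≤ (A * Complex.abs (Polynomial.aeval ξ P)) * ((H:ℝ)^E.card * B) := hkey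
    _ = Complex.abs (Polynomial.aeval ξ P) * (H:ℝ)^E.card * (A * B) := by ring

end MahlerAux
namespace MahlerAux

lemma pigeonhole {ξ : ℂ} (hξ : ¬ IsAlgebraic ℚ ξ) (n q H : ℕ) (hq : 2*q + 2 ≤ n + 1)
    (hH : 3 ≤ H) :
    ∃ x ∈ capSet ξ n H,
      x ≤ 2 * ((n+1) * H * (max 1 (Complex.abs ξ))^n) / ((H:ℝ)+1)^q := by
  classical
  set M : ℝ := max 1 (Complex.abs ξ) with hM
  have hM1 : (1:ℝ) ≤ M := le_max_left _ _
  have hHpos : (0:ℝ) < H := by positivity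
  set S : ℝ := (n+1) * H * M^n with hS
  have hSpos : 0 < S := by positivity
  set m : ℕ := (H+1)^q with hm
  have hm1 : 1 ≤ m := Nat.one_le_pow _ _ (by omega)
  set δ : ℝ := S / m with hδ
  have hδpos : 0 < δ := by positivity
  have hδm : (m:ℝ) * δ = S := by
    have hm0 : (m:ℝ) ≠ 0 := by positivity
    rw [hδ]; field_simp
  -- the evaluation map
  set v : (Fin (n+1) → Fin (H+1)) → ℂ :=
    fun f => ∑ k : Fin (n+1), ((f k : ℤ) : ℂ) * ξ^(k:ℕ) with hv
  have hvbound : ∀ f, Complex.abs (v f) ≤ S := by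
    intro f
    refine le_trans (AbsoluteValue.sum_le _ _ _) ?_
    have : ∀ k : Fin (n+1), Complex.abs (((f k : ℤ) : ℂ) * ξ^(k:ℕ)) ≤ H * M^n := by
      intro k
      rw [map_mul, map_pow, Complex.abs_intCast]
      have h1 : |((f k : ℤ):ℝ)| ≤ (H:ℝ) := by
        rw [abs_of_nonneg (by positivity)]
        exact_mod_cast Nat.lt_succ_iff.mp (f k).2
      have h2 : Complex.abs ξ ^ (k:ℕ) ≤ M^n :=
        le_trans (pow_le_pow_left₀ (AbsoluteValue.nonneg _ _) (le_max_right _ _) _)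
          (pow_le_pow_right₀ hM1 (Nat.lt_succ_iff.mp k.2))
      exact mul_le_mul h1 h2 (by positivity) (by positivity)
    refine le_trans (Finset.sum_le_sum (fun k _ => this k)) ?_
    rw [Finset.sum_const, Finset.card_univ, Fintype.card_fin, nsmul_eq_mul, hS]
    push_cast
    rw [mul_assoc]
  -- cells
  set cell : ℂ → ℤ × ℤ := fun z => (⌊z.re/δ⌋, ⌊z.im/δ⌋) with hcell
  have hfloor : ∀ x : ℝ, |x| ≤ S → ⌊x/δ⌋ ∈ Finset.Icc (-(m:ℤ)) m := by
    intro x hx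
    rw [abs_le] at hx
    rw [Finset.mem_Icc]
    constructor
    · rw [Int.le_floor]
      push_cast
      rw [le_div_iff₀ hδpos]
      nlinarith
    · refine le_trans (Int.floor_le_floor ((div_le_div_iff_of_pos_right hδpos).mpr hx.2)) ?_
      rw [show S/δ = (m:ℝ) from by rw [div_eq_iff hδpos.ne', ← hδm]]
      simp
  have hmaps : ∀ f : Fin (n+1) → Fin (H+1), cell (v f) ∈
      (Finset.Icc (-(m:ℤ)) m) ×ˢ (Finset.Icc (-(m:ℤ)) m) := by
    intro f
    rw [Finset.mem_product]
    have h1 := hvbound f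
    constructor
    · exact hfloor _ (le_trans (Complex.abs_re_le_norm _) h1)
    · exact hfloor _ (le_trans (Complex.abs_im_le_norm _) h1)
  -- cardinality comparison
  have hcard : ((Finset.Icc (-(m:ℤ)) m) ×ˢ (Finset.Icc (-(m:ℤ)) m)).card
      < (Finset.univ : Finset (Fin (n+1) → Fin (H+1))).card := by
    rw [Finset.card_product, Int.card_Icc, Finset.card_univ, Fintype.card_fun,
      Fintype.card_fin, Fintype.card_fin]
    have h1 : ((m:ℤ) + 1 - -(m:ℤ)).toNat = 2*m+1 := by omega
    rw [h1]
    have h2 : (2*m+1)*(2*m+1) ≤ 9*(m*m) := by nlinarith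
    have h3 : 9*(m*m) < (H+1)^(2*q+2) := by
      have : m*m = (H+1)^(2*q) := by rw [hm, ← pow_add]; ring_nf
      rw [this, pow_add]
      have h4 : 9 < (H+1)^2 := by nlinarith
      have h5 : 0 < (H+1)^(2*q) := Nat.pow_pos (by omega)
      calc 9*(H+1)^(2*q) < (H+1)^2 * (H+1)^(2*q) := by
            exact Nat.mul_lt_mul_of_lt_of_le h4 (le_refl _) h5
        _ = (H+1)^(2*q) * (H+1)^2 := Nat.mul_comm _ _
    calc (2*m+1)*(2*m+1) ≤ 9*(m*m) := h2
      _ < (H+1)^(2*q+2) := h3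
      _ ≤ (H+1)^(n+1) := Nat.pow_le_pow_right (by omega) hq
  obtain ⟨f, -, g, -, hfg, hcfg⟩ :=
    Finset.exists_ne_map_eq_of_card_lt_of_maps_to hcard (fun f _ => hmaps f)
  -- the difference polynomial
  set c : ℕ → ℤ := fun k => if h : k < n+1 then ((f ⟨k,h⟩ : ℤ) - (g ⟨k,h⟩ : ℤ)) else 0 with hc
  set P : Polynomial ℤ := ∑ k ∈ Finset.range (n+1), Polynomial.C (c k) * Polynomial.X^k with hP
  have hcoeff : ∀ j, P.coeff j = if j < n+1 then c j else 0 := by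
    intro j
    rw [hP, Polynomial.finset_sum_coeff]
    simp only [Polynomial.coeff_C_mul, Polynomial.coeff_X_pow, mul_ite, mul_one, mul_zero]
    rw [Finset.sum_ite_eq (Finset.range (n+1)) j c]
    simp [Finset.mem_range]
  have hP0 : P ≠ 0 := by
    obtain ⟨k, hk⟩ := Function.ne_iff.mp hfg
    intro h
    apply hk
    have := hcoeff (k : ℕ)
    rw [h, Polynomial.coeff_zero] at this
    rw [if_pos k.2] at this
    have hsub : ((f k : ℤ)) - ((g k : ℤ)) = 0 := by
      have h2 := this.symm
      simp [hc, dif_pos k.2] at h2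
      exact h2 (Nat.lt_succ_iff.mp k.2)
    have hval : ((f k : ℤ)) = ((g k : ℤ)) := sub_eq_zero.mp hsub
    have : (f k : ℕ) = (g k : ℕ) := by exact_mod_cast hval
    exact Fin.ext this
  have hPd : P.natDegree ≤ n := by
    rw [Polynomial.natDegree_le_iff_coeff_eq_zero]
    intro j hj
    rw [hcoeff j, if_neg (by omega)]
  have hPh : ∀ k, |P.coeff k| ≤ (H : ℤ) := by
    intro k
    rw [hcoeff k]
    split_ifs with h
    · simp only [hc]
      rw [dif_pos h]
      have h1 : ((f ⟨k,h⟩ : ℤ)) ≤ H := by exact_mod_cast Nat.lt_succ_iff.mp (f ⟨k,h⟩).2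
      have h2 : ((g ⟨k,h⟩ : ℤ)) ≤ H := by exact_mod_cast Nat.lt_succ_iff.mp (g ⟨k,h⟩).2
      have h3 : (0:ℤ) ≤ (f ⟨k,h⟩ : ℤ) := by positivity
      have h4 : (0:ℤ) ≤ (g ⟨k,h⟩ : ℤ) := by positivity
      rw [abs_le]; omega
    · simp
  have hPval : Polynomial.aeval ξ P = v f - v g := by
    rw [hP, map_sum]
    have : ∀ k ∈ Finset.range (n+1),
        Polynomial.aeval ξ (Polynomial.C (c k) * Polynomial.X^k) = ((c k : ℂ)) * ξ^k := by
      intro k _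
      rw [map_mul, map_pow, Polynomial.aeval_X, Polynomial.aeval_C]
      simp [algebraMap_int_eq]
    rw [Finset.sum_congr rfl this, Finset.sum_range
      (fun k => ((c k : ℂ)) * ξ^k), hv]
    rw [← Finset.sum_sub_distrib]
    refine Finset.sum_congr rfl (fun k _ => ?_)
    simp only [hc]
    rw [dif_pos k.2]
    push_cast
    ring
  have hPv : Polynomial.aeval ξ P ≠ 0 := by
    intro h
    exact hξ ((IsFractionRing.isAlgebraic_iff ℤ ℚ ℂ).mp ⟨P, hP0, h⟩)
  refine ⟨Complex.abs (Polynomial.aeval ξ P), ⟨P, hP0, hPd, hPh, hPv, rfl⟩, ?_⟩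
  -- smallness from equal cells
  have hre : |(v f).re - (v g).re| < δ := by
    have h1 : ⌊(v f).re/δ⌋ = ⌊(v g).re/δ⌋ := congrArg Prod.fst hcfg
    have h2 := Int.abs_sub_lt_one_of_floor_eq_floor h1
    rw [div_sub_div_same] at h2
    rw [abs_div, abs_of_pos hδpos] at h2
    calc |(v f).re - (v g).re| = |(v f).re - (v g).re| / δ * δ := by field_simp
      _ < 1 * δ := by exact mul_lt_mul_of_pos_right h2 hδpos
      _ = δ := one_mul δ
  have him : |(v f).im - (v g).im| < δ := by
    have h1 : ⌊(v f).im/δ⌋ = ⌊(v g).im/δ⌋ := congrArg Prod.snd hcfg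
    have h2 := Int.abs_sub_lt_one_of_floor_eq_floor h1
    rw [div_sub_div_same] at h2
    rw [abs_div, abs_of_pos hδpos] at h2
    calc |(v f).im - (v g).im| = |(v f).im - (v g).im| / δ * δ := by field_simp
      _ < 1 * δ := by exact mul_lt_mul_of_pos_right h2 hδpos
      _ = δ := one_mul δ
  have hsmall : Complex.abs (v f - v g) ≤ 2 * δ := by
    refine le_trans (Complex.norm_le_abs_re_add_abs_im _) ?_
    rw [Complex.sub_re, Complex.sub_im]
    linarith
  rw [hPval]
  refine le_trans hsmall ?_
  have hδle : δ ≤ S / ((H:ℝ)+1)^q := by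
    rw [hδ]
    have : ((m:ℝ)) = ((H:ℝ)+1)^q := by rw [hm]; push_cast; ring
    rw [this]
  calc 2 * δ ≤ 2 * (S / ((H:ℝ)+1)^q) := by linarith
    _ = 2 * S / ((H:ℝ)+1)^q := by ring

end MahlerAux
namespace MahlerAux

open Filter in
lemma limsup_coe_le_of_tendsto {u v : ℕ → ℝ} {a : ℝ}
    (h : ∀ᶠ H in atTop, u H ≤ v H) (hv : Tendsto v atTop (nhds a)) :
    Filter.limsup (fun H => (u H : EReal)) atTop ≤ (a : EReal) := by
  have hv' : Tendsto (fun H => (v H : EReal)) atTop (nhds (a : EReal)) :=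
    EReal.tendsto_coe.mpr hv
  rw [← hv'.limsup_eq]
  exact Filter.limsup_le_limsup (h.mono fun H hH => EReal.coe_le_coe_iff.mpr hH)

open Filter in
lemma le_limsup_coe_of_tendsto {u v : ℕ → ℝ} {a : ℝ}
    (h : ∀ᶠ H in atTop, v H ≤ u H) (hv : Tendsto v atTop (nhds a)) :
    (a : EReal) ≤ Filter.limsup (fun H => (u H : EReal)) atTop := by
  have hv' : Tendsto (fun H => (v H : EReal)) atTop (nhds (a : EReal)) :=
    EReal.tendsto_coe.mpr hv
  rw [← hv'.limsup_eq]
  exact Filter.limsup_le_limsup (h.mono fun H hH => EReal.coe_le_coe_iff.mpr hH)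

open Filter in
lemma log_nat_tendsto : Tendsto (fun H : ℕ => Real.log H) atTop atTop :=
  Real.tendsto_log_atTop.comp tendsto_natCast_atTop_atTop

/-- evaluation of the key quotient bound -/
lemma omegaNH_le {ξ : ℂ} {n d : ℕ} {c : ℝ} (hn : 1 ≤ n) (hc : 0 < c)
    (hcap : ∀ H : ℕ, 1 ≤ H → c / (H:ℝ)^d ≤ mahlerOmegaCap ξ n H) :
    ∀ H : ℕ, 2 ≤ H →
      mahlerOmegaNH ξ n H ≤ (d:ℝ)/n + (- Real.log c)/(n * Real.log H) := by
  intro H hH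
  have hH1 : (1:ℕ) ≤ H := by omega
  have hL : 0 < Real.log H := Real.log_pos (by exact_mod_cast hH)
  have hHpos : (0:ℝ) < H := by positivity
  have hcpos : 0 < mahlerOmegaCap ξ n H := cap_pos ξ n hH1
  have hlog : Real.log c - d * Real.log H ≤ Real.log (mahlerOmegaCap ξ n H) := by
    have h1 : Real.log (c / (H:ℝ)^d) ≤ Real.log (mahlerOmegaCap ξ n H) :=
      Real.log_le_log (by positivity) (hcap H hH1)
    rwa [Real.log_div (ne_of_gt hc) (by positivity), Real.log_pow] at h1
  have hnL : 0 < (n:ℝ) * Real.log H := by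
    have : (0:ℝ) < n := by exact_mod_cast hn
    positivity
  unfold mahlerOmegaNH
  rw [div_le_iff₀ hnL]
  have hgoal : -Real.log (mahlerOmegaCap ξ n H) ≤ d * Real.log H - Real.log c := by
    linarith
  refine le_trans hgoal (le_of_eq ?_)
  field_simp
  ring

lemma omegaNH_ge {ξ : ℂ} {n q : ℕ} {c : ℝ} (hn : 1 ≤ n) (hc : 1 ≤ c)
    (hcap : ∀ H : ℕ, 3 ≤ H → mahlerOmegaCap ξ n H ≤ c / (H:ℝ)^(q-1)) :
    ∀ H : ℕ, 3 ≤ H →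
      ((q:ℝ)-1)/n - (Real.log c)/(n * Real.log H) ≤ mahlerOmegaNH ξ n H := by
  intro H hH
  have hH1 : (1:ℕ) ≤ H := by omega
  have hL : 0 < Real.log H := Real.log_pos (by exact_mod_cast (by omega : 2 ≤ H))
  have hHpos : (0:ℝ) < H := by positivity
  have hcpos : 0 < mahlerOmegaCap ξ n H := cap_pos ξ n hH1
  have hlog : Real.log (mahlerOmegaCap ξ n H) ≤ Real.log c - ((q:ℝ)-1) * Real.log H := by
    have h1 : Real.log (mahlerOmegaCap ξ n H) ≤ Real.log (c / (H:ℝ)^(q-1)) :=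
      Real.log_le_log hcpos (hcap H hH)
    rw [Real.log_div (by linarith) (by positivity), Real.log_pow] at h1
    rcases Nat.eq_zero_or_pos q with hq | hq
    · subst hq
      simp only [Nat.zero_sub, pow_zero] at h1 ⊢
      push_cast at h1 ⊢
      nlinarith [Real.log_nonneg hc]
    · have : ((q - 1 : ℕ) : ℝ) = (q:ℝ) - 1 := by
        have : 1 ≤ q := hq
        push_cast [this]
        ring
      rwa [this] at h1
  have hnL : 0 < (n:ℝ) * Real.log H := by
    have : (0:ℝ) < n := by exact_mod_cast hn
    positivity
  unfold mahlerOmegaNH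
  rw [le_div_iff₀ hnL]
  have hgoal : ((q:ℝ)-1) * Real.log H - Real.log c ≤ -Real.log (mahlerOmegaCap ξ n H) := by
    linarith
  refine le_trans (le_of_eq ?_) hgoal
  field_simp

open Filter in
lemma omegaN_le {ξ : ℂ} {n d : ℕ} {c : ℝ} (hn : 1 ≤ n) (hc : 0 < c)
    (hcap : ∀ H : ℕ, 1 ≤ H → c / (H:ℝ)^d ≤ mahlerOmegaCap ξ n H) :
    mahlerOmegaN ξ n ≤ (((d:ℝ)/n : ℝ) : EReal) := by
  unfold mahlerOmegaN
  refine limsup_coe_le_of_tendsto (v := fun H => (d:ℝ)/n + (- Real.log c)/(n * Real.log H))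
    ?_ ?_
  · filter_upwards [eventually_ge_atTop 2] with H hH
    exact omegaNH_le hn hc hcap H hH
  · have h1 : Tendsto (fun H : ℕ => (n:ℝ) * Real.log H) atTop atTop := by
      apply Tendsto.const_mul_atTop (by exact_mod_cast hn : (0:ℝ) < n) log_nat_tendsto
    have h2 : Tendsto (fun H : ℕ => (- Real.log c)/(n * Real.log H)) atTop (nhds 0) :=
      Tendsto.div_atTop tendsto_const_nhds h1
    simpa using (tendsto_const_nhds (x := (d:ℝ)/n)).add h2

open Filter in
lemma omegaN_ge {ξ : ℂ} {n q : ℕ} {c : ℝ} (hn : 1 ≤ n) (hc : 1 ≤ c)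
    (hcap : ∀ H : ℕ, 3 ≤ H → mahlerOmegaCap ξ n H ≤ c / (H:ℝ)^(q-1)) :
    ((((q:ℝ)-1)/n : ℝ) : EReal) ≤ mahlerOmegaN ξ n := by
  unfold mahlerOmegaN
  refine le_limsup_coe_of_tendsto (v := fun H => ((q:ℝ)-1)/n - (Real.log c)/(n * Real.log H))
    ?_ ?_
  · filter_upwards [eventually_ge_atTop 3] with H hH
    exact omegaNH_ge hn hc hcap H hH
  · have h1 : Tendsto (fun H : ℕ => (n:ℝ) * Real.log H) atTop atTop := by
      apply Tendsto.const_mul_atTop (by exact_mod_cast hn : (0:ℝ) < n) log_nat_tendsto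
    have h2 : Tendsto (fun H : ℕ => (Real.log c)/(n * Real.log H)) atTop (nhds 0) :=
      Tendsto.div_atTop tendsto_const_nhds h1
    simpa using (tendsto_const_nhds (x := ((q:ℝ)-1)/n)).sub h2

open Filter in
lemma omegaN_nonneg (ξ : ℂ) (n : ℕ) : (0 : EReal) ≤ mahlerOmegaN ξ n := by
  unfold mahlerOmegaN
  have h0 : (0 : EReal) = ((0:ℝ) : EReal) := rfl
  rw [h0]
  refine le_limsup_coe_of_tendsto (v := fun _ => (0:ℝ)) ?_ tendsto_const_nhds
  filter_upwards [eventually_ge_atTop 1] with H hH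
  exact omegaNH_nonneg ξ n hH

end MahlerAux
open Filter in
/-- A complex number is algebraic over ℚ iff its Mahler exponent `ω` vanishes,
i.e. iff it is an A-number in Mahler's classification. -/
theorem isAlgebraic_iff_mahlerOmega_eq_zero (ξ : ℂ) :
    IsAlgebraic ℚ ξ ↔ mahlerOmega ξ = 0 := by
  constructor
  · intro hξ
    obtain ⟨d, hd⟩ := MahlerAux.liouville hξ
    have hub : ∀ n : ℕ, 1 ≤ n → mahlerOmegaN ξ n ≤ (((d:ℝ)/n : ℝ) : EReal) := by
      intro n hn
      obtain ⟨c, hc, hP⟩ := hd n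
      refine MahlerAux.omegaN_le hn hc ?_
      intro H hH
      refine le_csInf ⟨1, MahlerAux.one_mem_capSet ξ n hH⟩ ?_
      rintro x ⟨P, hP0, hPd, hPh, hPv, rfl⟩
      exact hP H hH P hPd hPh hPv
    refine le_antisymm ?_ ?_
    · unfold mahlerOmega
      have hv : Tendsto (fun n : ℕ => (((d:ℝ)/n : ℝ) : EReal)) atTop (nhds ((0:ℝ):EReal)) :=
        EReal.tendsto_coe.mpr (tendsto_const_div_atTop_nhds_zero_nat (d:ℝ))
      calc limsup (fun n => mahlerOmegaN ξ n) atTop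
          ≤ limsup (fun n : ℕ => (((d:ℝ)/n : ℝ) : EReal)) atTop :=
            Filter.limsup_le_limsup
              (by filter_upwards [eventually_ge_atTop 1] with n hn; exact hub n hn)
        _ = ((0:ℝ):EReal) := hv.limsup_eq
        _ = 0 := by simp
    · unfold mahlerOmega
      calc (0:EReal) = limsup (fun _ : ℕ => (0:EReal)) atTop := (Filter.limsup_const _).symm
        _ ≤ limsup (fun n => mahlerOmegaN ξ n) atTop :=
          Filter.limsup_le_limsup (Eventually.of_forall fun n => MahlerAux.omegaN_nonneg ξ n)
  · intro h0
    by_contra hξ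
    have hlb : ∀ n : ℕ, 24 ≤ n → (((1:ℝ)/4 : ℝ) : EReal) ≤ mahlerOmegaN ξ n := by
      intro n hn
      set q := n/3 with hq
      have hq1 : 1 ≤ q := by omega
      have hqn : 2*q + 2 ≤ n+1 := by omega
      set M := max 1 (Complex.abs ξ) with hM
      have hM1 : (1:ℝ) ≤ M := le_max_left _ _
      have hMn : (1:ℝ) ≤ M^n := one_le_pow₀ hM1
      set c : ℝ := 2*((n:ℝ)+1)*M^n with hc
      have hc1 : (1:ℝ) ≤ c := by nlinarith [Nat.cast_nonneg (α := ℝ) n]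
      have hcap : ∀ H : ℕ, 3 ≤ H → mahlerOmegaCap ξ n H ≤ c / (H:ℝ)^(q-1) := by
        intro H hH
        obtain ⟨x, hx, hxle⟩ := MahlerAux.pigeonhole hξ n q H hqn hH
        refine le_trans (csInf_le (MahlerAux.bddBelow_capSet ξ n H) hx) (le_trans hxle ?_)
        have hHpos : (0:ℝ) < H := by exact_mod_cast (by omega : 0 < H)
        rw [div_le_div_iff₀ (by positivity) (by positivity)]
        have hpow : (H:ℝ) * (H:ℝ)^(q-1) = (H:ℝ)^q := by
          rw [← pow_succ']
          congr 1
          omega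
        have hle : ((H:ℝ))^q ≤ ((H:ℝ)+1)^q := by
          exact pow_le_pow_left₀ (by positivity) (by linarith) q
        calc 2 * (((n:ℝ)+1) * H * M^n) * (H:ℝ)^(q-1)
            = c * ((H:ℝ) * (H:ℝ)^(q-1)) := by rw [hc]; ring
          _ = c * (H:ℝ)^q := by rw [hpow]
          _ ≤ c * ((H:ℝ)+1)^q := by
              exact mul_le_mul_of_nonneg_left hle (by linarith)
      have h1 := MahlerAux.omegaN_ge (ξ := ξ) (n := n) (q := q) (by omega) hc1 hcap
      refine le_trans ?_ h1
      rw [EReal.coe_le_coe_iff]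
      have hnat : n ≤ 3*q + 2 := by omega
      have h3q : (n:ℝ) ≤ 3*(q:ℝ) + 2 := by exact_mod_cast hnat
      have hnR : (24:ℝ) ≤ (n:ℝ) := by exact_mod_cast hn
      rw [le_div_iff₀ (by linarith : (0:ℝ) < (n:ℝ))]
      linarith
    have hfin : (((1:ℝ)/4 : ℝ) : EReal) ≤ mahlerOmega ξ := by
      unfold mahlerOmega
      calc (((1:ℝ)/4:ℝ):EReal)
          = limsup (fun _ : ℕ => (((1:ℝ)/4:ℝ):EReal)) atTop := (Filter.limsup_const _).symm
        _ ≤ limsup (fun n => mahlerOmegaN ξ n) atTop :=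
          Filter.limsup_le_limsup
            (by filter_upwards [eventually_ge_atTop 24] with n hn; exact hlb n hn)
    rw [h0] at hfin
    rw [← EReal.coe_zero] at hfin
    have hcontra : ((1:ℝ)/4) ≤ (0:ℝ) := EReal.coe_le_coe_iff.mp hfin
    linarith
end

section
/- Given n ≥ 1 and complex numbers a₀, a₁, …, aₙ, not all zero, the polynomial P(z) = a₀·(z+1)(z²+1)⋯(zⁿ+1) + Σ_{k=1}^{n} aₖ · z^k · ∏_{1 ≤ j ≤ n, j ≠ k} (z^j + 1) is not the zero polynomial. -/
open Polynomial Finset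

noncomputable def Paux (n : ℕ) (a : ℕ → ℂ) : Polynomial ℂ :=
  C (a 0) * ∏ j ∈ Finset.Icc 1 n, (X ^ j + 1) +
    ∑ k ∈ Finset.Icc 1 n, C (a k) * X ^ k *
      ∏ j ∈ (Finset.Icc 1 n).erase k, (X ^ j + 1)

lemma Paux_split (n : ℕ) (a : ℕ → ℂ) :
    Paux (n + 1) a = (X ^ (n + 1) + 1) * Paux n a +
      C (a (n + 1)) * X ^ (n + 1) * ∏ j ∈ Finset.Icc 1 n, (X ^ j + 1) := by
  have hins : Finset.Icc 1 (n + 1) = insert (n + 1) (Finset.Icc 1 n) := by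
    ext x
    simp only [Finset.mem_Icc, Finset.mem_insert]
    omega
  have hnot : (n + 1) ∉ Finset.Icc 1 n := by simp
  rw [Paux, hins, Finset.prod_insert hnot, Finset.sum_insert hnot,
    Finset.erase_insert hnot]
  have hsum : ∑ k ∈ Finset.Icc 1 n, C (a k) * X ^ k *
      ∏ j ∈ (insert (n + 1) (Finset.Icc 1 n)).erase k, (X ^ j + 1) =
      (X ^ (n + 1) + 1) * ∑ k ∈ Finset.Icc 1 n, C (a k) * X ^ k *
      ∏ j ∈ (Finset.Icc 1 n).erase k, (X ^ j + 1) := by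
    rw [Finset.mul_sum]
    refine Finset.sum_congr rfl fun k hk => ?_
    have hkne : n + 1 ≠ k := by simp at hk; omega
    rw [Finset.erase_insert_of_ne hkne,
      Finset.prod_insert (by simp [Finset.mem_erase])]
    ring
  rw [hsum, Paux]
  ring

lemma Paux_eq_zero_imp (n : ℕ) (a : ℕ → ℂ) (h : Paux n a = 0) :
    ∀ k ≤ n, a k = 0 := by
  induction n generalizing a with
  | zero =>
    intro k hk
    interval_cases k
    have := congrArg (eval 0) h
    simpa [Paux] using this
  | succ n ih =>
    -- a primitive 2(n+1)-th root of unity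
    obtain ⟨ζ, hζ⟩ : ∃ ζ : ℂ, IsPrimitiveRoot ζ (2 * (n + 1)) :=
      ⟨_, Complex.isPrimitiveRoot_exp _ (by positivity)⟩
    have hζn : ζ ^ (n + 1) = -1 := by
      have h1 : (ζ ^ (n + 1)) * (ζ ^ (n + 1)) = 1 := by
        rw [← pow_add]
        have := hζ.pow_eq_one
        rw [show 2 * (n + 1) = (n + 1) + (n + 1) by ring] at this
        exact this
      rcases mul_self_eq_one_iff.mp h1 with h2 | h2
      · exact absurd h2 (hζ.pow_ne_one_of_pos_of_lt (by omega) (by omega))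
      · exact h2
    have hfac : ∀ j ∈ Finset.Icc 1 n, ζ ^ j + 1 ≠ 0 := by
      intro j hj hj0
      simp only [Finset.mem_Icc] at hj
      have hj2 : ζ ^ (2 * j) = 1 := by
        have : ζ ^ j = -1 := by linear_combination hj0
        rw [show 2 * j = j + j by ring, pow_add, this]
        ring
      have hdvd : 2 * (n + 1) ∣ 2 * j := hζ.dvd_of_pow_eq_one _ hj2
      have : (n + 1) ∣ j := (mul_dvd_mul_iff_left (two_ne_zero)).mp hdvd
      have := Nat.le_of_dvd (by omega) this
      omega
    have haN : a (n + 1) = 0 := by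
      have h0 := congrArg (eval ζ) h
      rw [Paux_split] at h0
      simp only [eval_add, eval_mul, eval_pow, eval_C, eval_X, eval_prod,
        eval_one, eval_zero, hζn] at h0
      have hprod : ∏ j ∈ Finset.Icc 1 n, (ζ ^ j + 1) ≠ 0 :=
        Finset.prod_ne_zero_iff.mpr hfac
      have h0' : a (n + 1) * (-1) * ∏ j ∈ Finset.Icc 1 n, (ζ ^ j + 1) = 0 := by
        linear_combination h0
      rcases mul_eq_zero.mp h0' with h2 | h2
      · rcases mul_eq_zero.mp h2 with h3 | h3
        · exact h3
        · norm_num at h3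
      · exact absurd h2 hprod
    have hQ : Paux n a = 0 := by
      rw [Paux_split, haN] at h
      simp only [map_zero, zero_mul] at h
      rw [add_zero] at h
      rcases mul_eq_zero.mp h with h2 | h2
      · exfalso
        have := congrArg (eval 0) h2
        simp at this
      · exact h2
    intro k hk
    rcases Nat.lt_or_ge k (n + 1) with h2 | h2
    · exact ih a hQ k (by omega)
    · have : k = n + 1 := by omega
      rw [this]; exact haN

/-- Given `n ≥ 1` and complex numbers `a 0, …, a n`, not all zero, the polynomial
`a₀ (z+1)(z²+1)⋯(zⁿ+1) + Σ_{k=1}^n aₖ zᵏ ∏_{j ≠ k} (zʲ+1)` is not the zero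
polynomial. -/
theorem interpolation_poly_ne_zero (n : ℕ) (hn : 1 ≤ n) (a : ℕ → ℂ)
    (ha : ∃ k ≤ n, a k ≠ 0) :
    (C (a 0) * ∏ j ∈ Finset.Icc 1 n, (X ^ j + 1) +
      ∑ k ∈ Finset.Icc 1 n, C (a k) * X ^ k *
        ∏ j ∈ (Finset.Icc 1 n).erase k, (X ^ j + 1)) ≠ (0 : Polynomial ℂ) := by
  intro h0
  obtain ⟨k, hk, hak⟩ := ha
  exact hak (Paux_eq_zero_imp n a h0 k hk)
end

section
/- Let (αₙ)_{n≥1} be an enumeration of the complex numbers algebraic over ℚ, and define 𝒰(w,z) = Σ_{n=1}^∞ [wⁿ / ((1 + Σ_{k=1}^{n} |σₖ(α₁,…,αₙ)|)(|w|ⁿ + 1) · n!)] · ∏_{k=1}^{n} (z − αₖ). Then for every fixed w ∈ ℂ, the function z ↦ 𝒰(w,z) is analytic on all of ℂ (an entire function). -/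
open Finset

/-- `a` (restricted to indices `n ≥ 1`) is an enumeration of the complex numbers
that are algebraic over ℚ: a bijection from the positive integers onto the set of
algebraic numbers. -/
def IsAlgEnumeration (a : ℕ → ℂ) : Prop :=
  Set.BijOn a (Set.Ici 1) {x : ℂ | IsAlgebraic ℚ x}

/-- The `k`-th elementary symmetric function `σ_k (a 1, …, a n)`:
the sum of all products of `k` distinct terms among `a 1, …, a n`. -/
noncomputable def esymmVal (a : ℕ → ℂ) (n k : ℕ) : ℂ :=
  ∑ s ∈ Finset.powersetCard k (Finset.Icc 1 n), ∏ i ∈ s, a i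

/-- The `n`-th term (for `n ≥ 1`) of the series defining the function `𝒰`:
`wⁿ / ((1 + Σ_{k=1}^n |σ_k(α₁,…,αₙ)|) (|w|ⁿ + 1) n!) ⋅ (z - α₁) ⋯ (z - αₙ)`. -/
noncomputable def Uterm (a : ℕ → ℂ) (w z : ℂ) (n : ℕ) : ℂ :=
  w ^ n /
      (((1 + ∑ k ∈ Finset.Icc 1 n, ‖esymmVal a n k‖ : ℝ) : ℂ) *
        (((‖w‖ ^ n + 1 : ℝ) : ℂ)) * (Nat.factorial n : ℂ)) *
    ∏ k ∈ Finset.Icc 1 n, (z - a k)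

/-- The function `𝒰(w, z) = Σ_{n=1}^∞ Uterm a w z n`. -/
noncomputable def U (a : ℕ → ℂ) (w z : ℂ) : ℂ :=
  ∑' n : ℕ, Uterm a w z (n + 1)

lemma prod_sub_eq_sum_esymm (a : ℕ → ℂ) (n : ℕ) (z : ℂ) :
    ∏ k ∈ Finset.Icc 1 n, (z - a k) =
      ∑ j ∈ Finset.range (n + 1), ((-1) ^ j * esymmVal a n j) * z ^ (n - j) := by
  have hcard : (Finset.Icc 1 n).card = n := by
    rw [Nat.card_Icc]; omega
  calc ∏ k ∈ Finset.Icc 1 n, (z - a k)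
      = ∏ k ∈ Finset.Icc 1 n, ((-a k) + z) := by
        refine Finset.prod_congr rfl fun k _ => by ring
    _ = ∑ t ∈ (Finset.Icc 1 n).powerset,
          (∏ i ∈ t, (-a i)) * ∏ _i ∈ Finset.Icc 1 n \ t, z :=
        Finset.prod_add _ _ _
    _ = ∑ t ∈ (Finset.Icc 1 n).powerset, (∏ i ∈ t, (-a i)) * z ^ (n - t.card) := by
        refine Finset.sum_congr rfl fun t ht => ?_
        rw [Finset.prod_const, Finset.card_sdiff_of_subset (Finset.mem_powerset.1 ht), hcard]
    _ = ∑ j ∈ Finset.range (n + 1), ∑ t ∈ Finset.powersetCard j (Finset.Icc 1 n),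
          (∏ i ∈ t, (-a i)) * z ^ (n - t.card) := by
        rw [Finset.powerset_card_disjiUnion]; erw [Finset.sum_disjiUnion]
        simp only [hcard]
    _ = ∑ j ∈ Finset.range (n + 1), ((-1) ^ j * esymmVal a n j) * z ^ (n - j) := by
        refine Finset.sum_congr rfl fun j _ => ?_
        have hre : ((-1 : ℂ) ^ j * (∑ s ∈ Finset.powersetCard j (Finset.Icc 1 n),
            ∏ i ∈ s, a i)) * z ^ (n - j) =
            ∑ s ∈ Finset.powersetCard j (Finset.Icc 1 n),
              (-1) ^ j * (∏ i ∈ s, a i) * z ^ (n - j) := by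
          rw [Finset.mul_sum, Finset.sum_mul]
        rw [esymmVal, hre]
        refine Finset.sum_congr rfl fun t ht => ?_
        have htc : t.card = j := (Finset.mem_powersetCard.1 ht).2
        have hneg : ∏ i ∈ t, (-a i) = (-1) ^ j * ∏ i ∈ t, a i := by
          rw [← htc, ← Finset.prod_const (-1 : ℂ), ← Finset.prod_mul_distrib]
          exact Finset.prod_congr rfl fun i _ => by ring
        rw [hneg, htc]

lemma prod_sub_bound (a : ℕ → ℂ) (n : ℕ) (z : ℂ) (R : ℝ) (hR : 1 ≤ R)
    (hz : ‖z‖ ≤ R) :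
    ‖∏ k ∈ Finset.Icc 1 n, (z - a k)‖ ≤
      R ^ n * (1 + ∑ k ∈ Finset.Icc 1 n, ‖esymmVal a n k‖) := by
  have hR0 : 0 ≤ R := le_trans zero_le_one hR
  rw [prod_sub_eq_sum_esymm]
  refine le_trans (norm_sum_le _ _) ?_
  have hterm : ∀ j ∈ Finset.range (n + 1),
      ‖((-1) ^ j * esymmVal a n j) * z ^ (n - j)‖ ≤
        R ^ n * ‖esymmVal a n j‖ := by
    intro j hj
    rw [norm_mul, norm_mul, norm_pow, norm_pow, norm_neg, norm_one, one_pow, one_mul]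
    have h1 : ‖z‖ ^ (n - j) ≤ R ^ (n - j) :=
      pow_le_pow_left₀ (norm_nonneg _) hz _
    have h2 : R ^ (n - j) ≤ R ^ n := pow_le_pow_right₀ hR (Nat.sub_le _ _)
    calc ‖esymmVal a n j‖ * ‖z‖ ^ (n - j)
        ≤ ‖esymmVal a n j‖ * R ^ n := by
          exact mul_le_mul_of_nonneg_left (le_trans h1 h2) (norm_nonneg _)
      _ = R ^ n * ‖esymmVal a n j‖ := mul_comm _ _
  refine le_trans (Finset.sum_le_sum hterm) ?_
  rw [← Finset.mul_sum]
  have hsplit : Finset.range (n + 1) = insert 0 (Finset.Icc 1 n) := by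
    ext x; simp [Finset.mem_range, Finset.mem_insert, Finset.mem_Icc]; omega
  have h0 : (0 : ℕ) ∉ Finset.Icc 1 n := by simp
  have hesymm0 : esymmVal a n 0 = 1 := by
    simp [esymmVal, Finset.powersetCard_zero]
  rw [hsplit, Finset.sum_insert h0, hesymm0, norm_one]

/-- For each fixed `w`, the function `z ↦ 𝒰(w, z)` is entire. -/
theorem U_analyticAt (a : ℕ → ℂ) (ha : IsAlgEnumeration a) (w : ℂ) (z : ℂ) :
    AnalyticAt ℂ (fun x : ℂ => U a w x) z := by
  set r : ℝ := ‖z‖ + 1 with hr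
  set R : ℝ := max r 1 with hRdef
  have hR1 : 1 ≤ R := le_max_right _ _
  have hR0 : 0 < R := lt_of_lt_of_le one_pos hR1
  -- summable bound
  have hu : Summable (fun n : ℕ => R ^ (n + 1) / (Nat.factorial (n + 1) : ℝ)) :=
    (summable_nat_add_iff 1).2 (Real.summable_pow_div_factorial R)
  have hzball : z ∈ Metric.ball (0 : ℂ) r := by
    rw [Metric.mem_ball, dist_zero_right]
    simp only [hr]
    linarith
  -- differentiability of each term
  have hdiff : ∀ n : ℕ, DifferentiableOn ℂ (fun x => Uterm a w x (n + 1))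
      (Metric.ball (0 : ℂ) r) := by
    intro n
    apply Differentiable.differentiableOn
    apply Differentiable.const_mul
    exact Differentiable.fun_finset_prod fun k _ => (differentiable_id.sub_const (a k) : Differentiable ℂ (fun x : ℂ => x - a k))
  -- bound
  have hbound : ∀ (n : ℕ) (x : ℂ), x ∈ Metric.ball (0 : ℂ) r →
      ‖Uterm a w x (n + 1)‖ ≤ R ^ (n + 1) / (Nat.factorial (n + 1) : ℝ) := by
    intro n x hx
    set m := n + 1 with hm
    have hxR : ‖x‖ ≤ R := by
      have : dist x 0 < r := Metric.mem_ball.1 hx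
      rw [dist_zero_right] at this
      calc ‖x‖ = ‖x‖ := rfl
        _ ≤ r := le_of_lt this
        _ ≤ R := le_max_left _ _
    have hsum0 : 0 ≤ ∑ k ∈ Finset.Icc 1 m, ‖esymmVal a m k‖ :=
      Finset.sum_nonneg fun _ _ => norm_nonneg _
    have hC : (0 : ℝ) < 1 + ∑ k ∈ Finset.Icc 1 m, ‖esymmVal a m k‖ := by
      linarith
    have hD : (0 : ℝ) < ‖w‖ ^ m + 1 := by positivity
    have hfac : (0 : ℝ) < (Nat.factorial m : ℝ) := Nat.cast_pos.2 (Nat.factorial_pos m)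
    have hP : ‖∏ k ∈ Finset.Icc 1 m, (x - a k)‖ ≤
        R ^ m * (1 + ∑ k ∈ Finset.Icc 1 m, ‖esymmVal a m k‖) :=
      prod_sub_bound a m x R hR1 hxR
    have hwD : ‖w‖ ^ m ≤ ‖w‖ ^ m + 1 := by linarith
    rw [Uterm, norm_mul, norm_div, norm_pow, norm_mul, norm_mul,
      Complex.norm_real, Real.norm_eq_abs, Complex.norm_real, Real.norm_eq_abs, Complex.norm_natCast,
      abs_of_pos hC, abs_of_pos hD, div_mul_eq_mul_div]
    have hnum : ‖w‖ ^ m * ‖∏ k ∈ Finset.Icc 1 m, (x - a k)‖ ≤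
        (‖w‖ ^ m + 1) *
          (R ^ m * (1 + ∑ k ∈ Finset.Icc 1 m, ‖esymmVal a m k‖)) :=
      mul_le_mul hwD hP (norm_nonneg _) (le_of_lt hD)
    calc ‖w‖ ^ m * ‖∏ k ∈ Finset.Icc 1 m, (x - a k)‖ /
          ((1 + ∑ k ∈ Finset.Icc 1 m, ‖esymmVal a m k‖) *
            (‖w‖ ^ m + 1) * (Nat.factorial m : ℝ))
        ≤ (‖w‖ ^ m + 1) *
            (R ^ m * (1 + ∑ k ∈ Finset.Icc 1 m, ‖esymmVal a m k‖)) /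
          ((1 + ∑ k ∈ Finset.Icc 1 m, ‖esymmVal a m k‖) *
            (‖w‖ ^ m + 1) * (Nat.factorial m : ℝ)) := by
          gcongr
      _ = R ^ m / (Nat.factorial m : ℝ) := by
          field_simp
  have hopen : IsOpen (Metric.ball (0 : ℂ) r) := Metric.isOpen_ball
  have hU : DifferentiableOn ℂ (fun x : ℂ => U a w x) (Metric.ball (0 : ℂ) r) := by
    have := Complex.differentiableOn_tsum_of_summable_norm hu hdiff hopen hbound
    simpa [U] using this
  exact hU.analyticAt (hopen.mem_nhds hzball)
end

section
/- Let (αₙ)_{n≥1} be an enumeration of the complex numbers algebraic over ℚ, and define 𝒰(w,z) = Σ_{n=1}^∞ [wⁿ / ((1 + Σ_{k=1}^{n} |σₖ(α₁,…,αₙ)|)(|w|ⁿ + 1) · n!)] · ∏_{k=1}^{n} (z − αₖ). If T is a complex number algebraic over ℚ, then 𝒰(T,α) is algebraic over ℚ for every complex number α algebraic over ℚ; that is, the exceptional set of z ↦ 𝒰(T,z) is the whole set of algebraic numbers. -/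
open Finset

lemma conj_isIntegral {z : ℂ} (hz : IsIntegral ℚ z) :
    IsIntegral ℚ ((starRingEnd ℂ) z) :=
  hz.map ((Complex.conjAe.restrictScalars ℚ).toAlgHom)

lemma abs_isIntegral {z : ℂ} (hz : IsIntegral ℚ z) :
    IsIntegral ℚ ((‖z‖ : ℝ) : ℂ) := by
  apply IsIntegral.of_pow (n := 2) two_pos
  have h : (((‖z‖ : ℝ) : ℂ)) ^ 2 = z * (starRingEnd ℂ) z := by
    rw [Complex.mul_conj]
    norm_cast
    exact Complex.sq_norm z
  rw [h]
  exact hz.mul (conj_isIntegral hz)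

lemma inv_isIntegral {z : ℂ} (hz : IsIntegral ℚ z) : IsIntegral ℚ z⁻¹ := by
  rw [← isAlgebraic_iff_isIntegral] at hz ⊢
  exact hz.inv

/-- If `T` is algebraic over ℚ, then `𝒰(T, α)` is algebraic for every algebraic `α`:
the exceptional set of `z ↦ 𝒰(T, z)` is the whole set of algebraic numbers. -/
theorem U_isAlgebraic_of_isAlgebraic (a : ℕ → ℂ) (ha : IsAlgEnumeration a)
    (T : ℂ) (hT : IsAlgebraic ℚ T) (α : ℂ) (hα : IsAlgebraic ℚ α) :
    IsAlgebraic ℚ (U a T α) := by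
  obtain ⟨m, hm1, hma⟩ := ha.surjOn hα
  have hm1 : 1 ≤ m := hm1
  have hmem : ∀ k, 1 ≤ k → IsIntegral ℚ (a k) := fun k hk =>
    (ha.mapsTo hk).isIntegral
  rw [isAlgebraic_iff_isIntegral, U]
  rw [tsum_eq_sum (s := Finset.range m) (f := fun n => Uterm a T α (n + 1)) ?_]
  · apply IsIntegral.sum
    intro n _
    unfold Uterm
    apply IsIntegral.mul
    · rw [div_eq_mul_inv]
      refine (hT.isIntegral.pow _).mul (inv_isIntegral ?_)
      push_cast
      refine IsIntegral.mul (IsIntegral.mul ?_ ?_) ?_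
      · refine isIntegral_one.add (IsIntegral.sum _ fun k _ => abs_isIntegral ?_)
        unfold esymmVal
        refine IsIntegral.sum _ fun s hs => IsIntegral.prod _ fun i hi => ?_
        exact hmem i (Finset.mem_Icc.mp ((Finset.mem_powersetCard.mp hs).1 hi)).1
      · exact ((abs_isIntegral hT.isIntegral).pow _).add isIntegral_one
      · exact (isAlgebraic_nat _).isIntegral
    · exact IsIntegral.prod _ fun k hk =>
        hα.isIntegral.sub (hmem k (Finset.mem_Icc.mp hk).1)
  · intro n hn
    have hnm : m ≤ n := le_of_not_gt (fun h => hn (Finset.mem_range.mpr h))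
    have hmmem : m ∈ Finset.Icc 1 (n + 1) := Finset.mem_Icc.mpr ⟨hm1, hnm.trans (Nat.le_succ n)⟩
    show Uterm a T α (n + 1) = 0
    unfold Uterm
    rw [Finset.prod_eq_zero hmmem (by rw [hma]; ring), mul_zero]
end
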